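/- arXiv:2312.06938 — 8 statements merged into one kernel-verified Lean document; each statement's English description precedes it below -/
import Mathlib

section
/- Let A ⊆ ℝⁿ, let p ∈ closure(A), and let h : ℝⁿ → ℝⁿ be a bi-Lipschitz homeomorphism. If A satisfies condition (SSP) at p, then there exists a bi-Lipschitz homeomorphism h̃ : ℝⁿ → ℝⁿ with h̃(0) = 0 such that h̃(LD_p(A)) ⊆ LD_{h(p)}(h(A)). -/
open Filter Topology Set Asymptotics

variable {E : Type*} [NormedAddCommGroup E] [NormedSpace ℝ E]

/-- The direction set `D_p(A)`. -/
def dirSet (A : Set E) (p : E) : Set E :=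
  {a | ‖a‖ = 1 ∧ ∃ x : ℕ → E, (∀ i, x i ∈ A ∧ x i ≠ p) ∧
    Tendsto x atTop (𝓝 p) ∧
    Tendsto (fun i => ‖x i - p‖⁻¹ • (x i - p)) atTop (𝓝 a)}

/-- The real tangent cone `LD_p(A)`. -/
def LDir (A : Set E) (p : E) : Set E :=
  {w | ∃ a ∈ dirSet A p, ∃ t : ℝ, 0 ≤ t ∧ w = t • a}

/-- Condition (SSP) at `p`. -/
def SSP (A : Set E) (p : E) : Prop :=
  ∀ a : ℕ → E, (∀ m, a m ≠ p) → Tendsto a atTop (𝓝 p) →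
    (∃ d ∈ dirSet A p, Tendsto (fun m => ‖a m - p‖⁻¹ • (a m - p)) atTop (𝓝 d)) →
    ∃ b : ℕ → E, (∀ m, b m ∈ A) ∧
      Tendsto (fun m => ‖a m - b m‖ / ‖a m - p‖) atTop (𝓝 0) ∧
      Tendsto (fun m => ‖a m - b m‖ / ‖b m - p‖) atTop (𝓝 0)

/-- The geometric directional bundle fiber `𝒢D_p(A)`. -/
def GDir (A : Set E) (p : E) : Set E :=
  {a | ‖a‖ = 1 ∧ ∃ q : ℕ → E, (∀ m, q m ∈ A) ∧ Tendsto q atTop (𝓝 p) ∧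
    ∃ u : ℕ → E, (∀ m, u m ∈ dirSet A (q m)) ∧ Tendsto u atTop (𝓝 a)}

/-- The cone `L𝒢D_p(A)` over the geometric directional bundle fiber. -/
def LGDir (A : Set E) (p : E) : Set E :=
  {w | ∃ a ∈ GDir A p, ∃ t : ℝ, 0 ≤ t ∧ w = t • a}

/-- A bi-Lipschitz homeomorphism of `E`: a bijection which is Lipschitz with
Lipschitz inverse (equivalently, antilipschitz). -/
def IsBiLipschitz (h : E → E) : Prop :=
  Function.Bijective h ∧ ∃ K K' : NNReal, LipschitzWith K h ∧ AntilipschitzWith K' h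

theorem aux {E : Type*} [NormedAddCommGroup E] [NormedSpace ℝ E]
    [ProperSpace E] [TopologicalSpace.SeparableSpace E]
    (A : Set E) (p : E) (h : E → E)
    (hh : IsBiLipschitz h) (hssp : SSP A p) :
    ∃ ht : E → E, IsBiLipschitz ht ∧ ht 0 = 0 ∧
      ht '' LDir A p ⊆ LDir (h '' A) (h p) := by
  obtain ⟨⟨hinj, hsurj⟩, K, K', hlip, hanti⟩ := hh
  haveI : Nonempty E := ⟨0⟩
  set hi := Function.invFun h with hhi
  have hri : Function.RightInverse hi h := Function.rightInverse_invFun hsurj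
  have hli : Function.LeftInverse hi h := Function.leftInverse_invFun hinj
  have hlipi : LipschitzWith K' hi := hanti.to_rightInverse hri
  -- rescaling parameters
  set t : ℕ → ℝ := fun m => ((m : ℝ) + 1)⁻¹ with hht
  have ht0 : ∀ m, 0 < t m := fun m => by positivity
  have htlim : Tendsto t atTop (𝓝 0) := by
    simpa [hht, one_div] using (tendsto_one_div_add_atTop_nhds_zero_nat :
      Tendsto (fun n : ℕ => 1 / ((n : ℝ) + 1)) atTop (𝓝 0))
  -- rescaled maps
  set F : ℕ → E → E := fun m x => (t m)⁻¹ • (h (p + t m • x) - h p) with hhF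
  set G : ℕ → E → E := fun m y => (t m)⁻¹ • (hi (h p + t m • y) - p) with hhG
  have hF0 : ∀ m, F m 0 = 0 := fun m => by simp [hhF]
  have hG0 : ∀ m, G m 0 = 0 := fun m => by simp [hhG, hli p]
  have hlipF : ∀ m, LipschitzWith K (F m) := by
    intro m
    apply LipschitzWith.of_dist_le_mul
    intro x y
    have h1 : dist (F m x) (F m y)
        = (t m)⁻¹ * dist (h (p + t m • x)) (h (p + t m • y)) := by
      rw [hhF]; rw [dist_smul₀, dist_sub_right, Real.norm_eq_abs,
        abs_of_pos (by positivity)]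
    rw [h1]
    have h2 : dist (h (p + t m • x)) (h (p + t m • y))
        ≤ K * (t m * dist x y) := by
      have := hlip.dist_le_mul (p + t m • x) (p + t m • y)
      rwa [dist_add_left, dist_smul₀, Real.norm_eq_abs,
        abs_of_pos (ht0 m)] at this
    calc (t m)⁻¹ * dist (h (p + t m • x)) (h (p + t m • y))
        ≤ (t m)⁻¹ * (K * (t m * dist x y)) := by
          exact mul_le_mul_of_nonneg_left h2 (by positivity)
      _ = K * dist x y := by
          rw [mul_left_comm, ← mul_assoc (t m)⁻¹, inv_mul_cancel₀ (ht0 m).ne', one_mul]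
  have hlipG : ∀ m, LipschitzWith K' (G m) := by
    intro m
    apply LipschitzWith.of_dist_le_mul
    intro x y
    have h1 : dist (G m x) (G m y)
        = (t m)⁻¹ * dist (hi (h p + t m • x)) (hi (h p + t m • y)) := by
      rw [hhG]; rw [dist_smul₀, dist_sub_right, Real.norm_eq_abs,
        abs_of_pos (by positivity)]
    rw [h1]
    have h2 : dist (hi (h p + t m • x)) (hi (h p + t m • y))
        ≤ K' * (t m * dist x y) := by
      have := hlipi.dist_le_mul (h p + t m • x) (h p + t m • y)
      rwa [dist_add_left, dist_smul₀, Real.norm_eq_abs,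
        abs_of_pos (ht0 m)] at this
    calc (t m)⁻¹ * dist (hi (h p + t m • x)) (hi (h p + t m • y))
        ≤ (t m)⁻¹ * (K' * (t m * dist x y)) := by
          exact mul_le_mul_of_nonneg_left h2 (by positivity)
      _ = K' * dist x y := by
          rw [mul_left_comm, ← mul_assoc (t m)⁻¹, inv_mul_cancel₀ (ht0 m).ne', one_mul]
  have hGF : ∀ m x, G m (F m x) = x := by
    intro m x
    have htm := (ht0 m).ne'
    rw [hhG, hhF]
    simp only
    rw [smul_inv_smul₀ htm, add_sub_cancel, hli, add_sub_cancel_left,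
      inv_smul_smul₀ htm]
  have hFG : ∀ m y, F m (G m y) = y := by
    intro m y
    have htm := (ht0 m).ne'
    rw [hhF, hhG]
    simp only
    rw [smul_inv_smul₀ htm, add_sub_cancel, hri, add_sub_cancel_left,
      inv_smul_smul₀ htm]
  -- bounds
  have hFb : ∀ m x, ‖F m x‖ ≤ K * ‖x‖ := by
    intro m x
    have := (hlipF m).dist_le_mul x 0
    simpa [hF0 m, dist_eq_norm] using this
  have hGb : ∀ m x, ‖G m x‖ ≤ K' * ‖x‖ := by
    intro m x
    have := (hlipG m).dist_le_mul x 0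
    simpa [hG0 m, dist_eq_norm] using this
  -- dense sequence and diagonal subsequence
  set q : ℕ → E := TopologicalSpace.denseSeq E with hhq
  have hq : DenseRange q := TopologicalSpace.denseRange_denseSeq E
  set S : Set (ℕ → E × E) :=
    univ.pi (fun k => Metric.closedBall (0 : E) (K * ‖q k‖) ×ˢ
      Metric.closedBall (0 : E) (K' * ‖q k‖)) with hhS
  have hScomp : IsCompact S :=
    isCompact_univ_pi fun k =>
      (isCompact_closedBall _ _).prod (isCompact_closedBall _ _)
  set Ψ : ℕ → (ℕ → E × E) := fun m k => (F m (q k), G m (q k)) with hhΨ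
  have hΨS : ∀ m, Ψ m ∈ S := by
    intro m
    rw [hhS, mem_univ_pi]
    intro k
    exact ⟨mem_closedBall_zero_iff.mpr (hFb m (q k)),
      mem_closedBall_zero_iff.mpr (hGb m (q k))⟩
  obtain ⟨u, -, φ, hφ, hconv⟩ := hScomp.tendsto_subseq hΨS
  have hconvF : ∀ k, Tendsto (fun j => F (φ j) (q k)) atTop (𝓝 (u k).1) := by
    intro k
    have := (tendsto_pi_nhds.mp hconv) k
    exact (continuous_fst.tendsto _).comp this
  have hconvG : ∀ k, Tendsto (fun j => G (φ j) (q k)) atTop (𝓝 (u k).2) := by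
    intro k
    have := (tendsto_pi_nhds.mp hconv) k
    exact (continuous_snd.tendsto _).comp this
  -- pointwise convergence everywhere
  have cauchy_everywhere : ∀ (L : NNReal) (H : ℕ → E → E),
      (∀ m, LipschitzWith L (H m)) →
      (∀ k, ∃ z, Tendsto (fun j => H (φ j) (q k)) atTop (𝓝 z)) →
      ∀ x, ∃ z, Tendsto (fun j => H (φ j) x) atTop (𝓝 z) := by
    intro L H hL hk x
    apply cauchySeq_tendsto_of_complete
    rw [Metric.cauchySeq_iff]
    intro ε hε
    have hL1 : (0 : ℝ) < L + 1 := by positivity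
    obtain ⟨k, hkd⟩ := hq.exists_dist_lt x (show (0:ℝ) < ε / (3 * (L + 1)) by positivity)
    obtain ⟨z, hz⟩ := hk k
    have hc := hz.cauchySeq
    rw [Metric.cauchySeq_iff] at hc
    obtain ⟨N, hN⟩ := hc (ε / 3) (by positivity)
    refine ⟨N, fun a ha b hb => ?_⟩
    have hd1 : dist (H (φ a) x) (H (φ a) (q k)) ≤ L * dist x (q k) :=
      (hL _).dist_le_mul _ _
    have hd3 : dist (H (φ b) (q k)) (H (φ b) x) ≤ L * dist x (q k) := by
      rw [dist_comm]; exact (hL _).dist_le_mul _ _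
    have hd2 : dist (H (φ a) (q k)) (H (φ b) (q k)) < ε / 3 := hN a ha b hb
    have hdk : (L : ℝ) * dist x (q k) < ε / 3 := by
      calc (L : ℝ) * dist x (q k) ≤ (L + 1) * dist x (q k) := by
            apply mul_le_mul_of_nonneg_right _ dist_nonneg
            linarith
        _ < (L + 1) * (ε / (3 * (L + 1))) := by
            apply mul_lt_mul_of_pos_left hkd hL1
        _ = ε / 3 := by field_simp
    calc dist (H (φ a) x) (H (φ b) x)
        ≤ dist (H (φ a) x) (H (φ a) (q k)) + dist (H (φ a) (q k)) (H (φ b) (q k))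
          + dist (H (φ b) (q k)) (H (φ b) x) := dist_triangle4 _ _ _ _
      _ < ε / 3 + ε / 3 + ε / 3 := by
          apply add_lt_add (add_lt_add_of_lt_of_lt (lt_of_le_of_lt hd1 hdk) hd2)
            (lt_of_le_of_lt hd3 hdk)
      _ = ε := by ring
  have hfex := cauchy_everywhere K F hlipF (fun k => ⟨(u k).1, hconvF k⟩)
  have hgex := cauchy_everywhere K' G hlipG (fun k => ⟨(u k).2, hconvG k⟩)
  choose f hf using hfex
  choose g hg using hgex
  -- basic properties of f and g
  have flip0 : f 0 = 0 :=
    tendsto_nhds_unique (hf 0) (by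
      have : (fun j => F (φ j) (0:E)) = fun _ => (0:E) := funext fun j => hF0 _
      rw [this]; exact tendsto_const_nhds)
  have hlipf : LipschitzWith K f := by
    apply LipschitzWith.of_dist_le_mul
    intro x y
    have hd : Tendsto (fun j => dist (F (φ j) x) (F (φ j) y)) atTop
        (𝓝 (dist (f x) (f y))) := (hf x).dist (hf y)
    exact le_of_tendsto hd (Eventually.of_forall fun j => (hlipF _).dist_le_mul x y)
  have hlipg : LipschitzWith K' g := by
    apply LipschitzWith.of_dist_le_mul
    intro x y
    have hd : Tendsto (fun j => dist (G (φ j) x) (G (φ j) y)) atTop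
        (𝓝 (dist (g x) (g y))) := (hg x).dist (hg y)
    exact le_of_tendsto hd (Eventually.of_forall fun j => (hlipG _).dist_le_mul x y)
  have comp_lemma : ∀ (L : NNReal) (H H' : ℕ → E → E) (f' g' : E → E),
      (∀ m, LipschitzWith L (H' m)) →
      (∀ x, Tendsto (fun j => H (φ j) x) atTop (𝓝 (f' x))) →
      (∀ x, Tendsto (fun j => H' (φ j) x) atTop (𝓝 (g' x))) →
      ∀ x, Tendsto (fun j => H' (φ j) (H (φ j) x)) atTop (𝓝 (g' (f' x))) := by
    intro L H H' f' g' hL hHf hHg x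
    rw [tendsto_iff_dist_tendsto_zero]
    apply squeeze_zero (fun j => dist_nonneg)
      (g := fun j => L * dist (H (φ j) x) (f' x) + dist (H' (φ j) (f' x)) (g' (f' x)))
    · intro j
      calc dist (H' (φ j) (H (φ j) x)) (g' (f' x))
          ≤ dist (H' (φ j) (H (φ j) x)) (H' (φ j) (f' x))
            + dist (H' (φ j) (f' x)) (g' (f' x)) := dist_triangle _ _ _
        _ ≤ L * dist (H (φ j) x) (f' x) + dist (H' (φ j) (f' x)) (g' (f' x)) := by
            exact add_le_add ((hL _).dist_le_mul _ _) le_rfl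
    · have h1 : Tendsto (fun j => dist (H (φ j) x) (f' x)) atTop (𝓝 0) :=
        tendsto_iff_dist_tendsto_zero.mp (hHf x)
      have h2 : Tendsto (fun j => dist (H' (φ j) (f' x)) (g' (f' x))) atTop (𝓝 0) :=
        tendsto_iff_dist_tendsto_zero.mp (hHg (f' x))
      simpa using (h1.const_mul (L:ℝ)).add h2
  have hgf : ∀ x, g (f x) = x := by
    intro x
    have h1 : Tendsto (fun j => G (φ j) (F (φ j) x)) atTop (𝓝 (g (f x))) :=
      comp_lemma K' F G f g hlipG hf hg x
    have h2 : Tendsto (fun j => G (φ j) (F (φ j) x)) atTop (𝓝 x) := by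
      have : (fun j => G (φ j) (F (φ j) x)) = fun _ => x := funext fun j => hGF _ _
      rw [this]; exact tendsto_const_nhds
    exact tendsto_nhds_unique h1 h2
  have hfg : ∀ y, f (g y) = y := by
    intro y
    have h1 : Tendsto (fun j => F (φ j) (G (φ j) y)) atTop (𝓝 (f (g y))) :=
      comp_lemma K G F g f hlipF hg hf y
    have h2 : Tendsto (fun j => F (φ j) (G (φ j) y)) atTop (𝓝 y) := by
      have : (fun j => F (φ j) (G (φ j) y)) = fun _ => y := funext fun j => hFG _ _
      rw [this]; exact tendsto_const_nhds
    exact tendsto_nhds_unique h1 h2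
  have hbijf : Function.Bijective f :=
    Function.bijective_iff_has_inverse.mpr ⟨g, hgf, hfg⟩
  have hantif : AntilipschitzWith K' f := hlipg.to_rightInverse hgf
  -- key lemma
  have key : ∀ a ∈ dirSet A p, ∀ tv : ℝ, 0 < tv →
      f (tv • a) ∈ LDir (h '' A) (h p) := by
    intro a ha tv htv
    set v : E := tv • a with hhv
    have hna : ‖a‖ = 1 := ha.1
    have hvnorm : ‖v‖ = tv := by
      rw [hhv, norm_smul, Real.norm_eq_abs, abs_of_pos htv, hna, mul_one]
    have hvne : v ≠ 0 := by
      intro hv; rw [hv, norm_zero] at hvnorm; exact htv.ne hvnorm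
    set s : ℕ → ℝ := fun j => t (φ j) with hhs
    have hs0 : ∀ j, 0 < s j := fun j => ht0 _
    have hslim : Tendsto s atTop (𝓝 0) := htlim.comp hφ.tendsto_atTop
    set am : ℕ → E := fun j => p + s j • v with hham
    have ham_ne : ∀ j, am j ≠ p := by
      intro j hj
      have h0 : s j • v = 0 := by
        have := congrArg (fun z => z - p) hj
        simpa [hham] using this
      exact smul_ne_zero (hs0 j).ne' hvne h0
    have ham_lim : Tendsto am atTop (𝓝 p) := by
      have : Tendsto (fun j => s j • v) atTop (𝓝 ((0:ℝ) • v)) := hslim.smul_const v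
      rw [zero_smul] at this
      simpa [hham] using tendsto_const_nhds.add this
    have hnorm_am : ∀ j, ‖am j - p‖ = s j * tv := by
      intro j
      rw [hham]; simp only [add_sub_cancel_left]
      rw [norm_smul, Real.norm_eq_abs, abs_of_pos (hs0 j), hvnorm]
    have hdir : (fun j => ‖am j - p‖⁻¹ • (am j - p)) = fun _ => a := by
      funext j
      have h1 : am j - p = (s j * tv) • a := by
        rw [hham]; simp only [add_sub_cancel_left]; rw [hhv, smul_smul]
      rw [hnorm_am j, h1, smul_smul, inv_mul_cancel₀ (by positivity), one_smul]
    obtain ⟨b, hbA, hr1, hr2⟩ := hssp am ham_ne ham_lim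
      ⟨a, ha, by rw [hdir]; exact tendsto_const_nhds⟩
    have hsmall : Tendsto (fun j => ‖am j - b j‖ / s j) atTop (𝓝 0) := by
      have heq : (fun j => ‖am j - b j‖ / s j)
          = fun j => (‖am j - b j‖ / ‖am j - p‖) * tv := by
        funext j
        rw [hnorm_am j]
        field_simp
      rw [heq]
      simpa using hr1.mul_const tv
    set y : ℕ → E := fun j => (s j)⁻¹ • (h (b j) - h p) with hhy
    have hyF : ∀ j, ‖y j - F (φ j) v‖ ≤ K * (‖am j - b j‖ / s j) := by
      intro j
      have h1 : y j - F (φ j) v = (s j)⁻¹ • (h (b j) - h (p + s j • v)) := by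
        rw [hhy, hhF]
        simp only
        rw [← smul_sub]
        congr 1
        abel
      rw [h1, norm_smul, Real.norm_eq_abs, abs_of_pos (by positivity : (0:ℝ) < (s j)⁻¹)]
      have h2 : ‖h (b j) - h (p + s j • v)‖ ≤ K * ‖b j - (p + s j • v)‖ := by
        have := hlip.dist_le_mul (b j) (p + s j • v)
        simpa [dist_eq_norm] using this
      have h3 : ‖b j - (p + s j • v)‖ = ‖am j - b j‖ := by
        rw [hham, norm_sub_rev]
      calc (s j)⁻¹ * ‖h (b j) - h (p + s j • v)‖
          ≤ (s j)⁻¹ * (K * ‖b j - (p + s j • v)‖) :=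
            mul_le_mul_of_nonneg_left h2 (by positivity)
        _ = K * (‖am j - b j‖ / s j) := by rw [h3]; field_simp
    have hy : Tendsto y atTop (𝓝 (f v)) := by
      have h0 : Tendsto (fun j => y j - F (φ j) v) atTop (𝓝 0) :=
        squeeze_zero_norm hyF (by simpa using hsmall.const_mul (K:ℝ))
      have := (hf v).add h0
      rw [add_zero] at this
      apply this.congr
      intro j; abel
    set w : E := f v with hhw
    have hwne : w ≠ 0 := by
      intro hw
      exact hvne (hbijf.1 (by rw [flip0, ← hhw, hw]))
    obtain ⟨N, hN⟩ := eventually_atTop.mp (hy.eventually_ne hwne)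
    have hbne : ∀ m, b (m + N) ≠ p := by
      intro m hb
      apply hN (m + N) (Nat.le_add_left N m)
      rw [hhy]; simp [hb]
    set x : ℕ → E := fun m => h (b (m + N)) with hhx
    have hytail : Tendsto (fun m => y (m + N)) atTop (𝓝 w) :=
      hy.comp (Filter.tendsto_add_atTop_nat N)
    have hstail : Tendsto (fun m => s (m + N)) atTop (𝓝 0) :=
      hslim.comp (Filter.tendsto_add_atTop_nat N)
    have hxy : ∀ m, x m - h p = s (m + N) • y (m + N) := by
      intro m
      rw [hhx, hhy]
      simp only
      rw [smul_inv_smul₀ (hs0 (m + N)).ne']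
    have hxlim : Tendsto x atTop (𝓝 (h p)) := by
      rw [← tendsto_sub_nhds_zero_iff]
      have := hstail.smul hytail
      rw [zero_smul] at this
      exact this.congr fun m => (hxy m).symm
    have hxdir : Tendsto (fun m => ‖x m - h p‖⁻¹ • (x m - h p)) atTop
        (𝓝 (‖w‖⁻¹ • w)) := by
      have heq : ∀ m, ‖x m - h p‖⁻¹ • (x m - h p)
          = ‖y (m + N)‖⁻¹ • y (m + N) := by
        intro m
        have hns : ‖s (m + N) • y (m + N)‖ = s (m + N) * ‖y (m + N)‖ := by
          rw [norm_smul, Real.norm_eq_abs, abs_of_pos (hs0 (m + N))]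
        rw [hxy m, hns, smul_smul]
        congr 1
        rw [mul_inv, mul_comm, ← mul_assoc, mul_inv_cancel₀ (hs0 (m + N)).ne', one_mul]
      have hlim : Tendsto (fun m => ‖y (m + N)‖⁻¹ • y (m + N)) atTop
          (𝓝 (‖w‖⁻¹ • w)) :=
        ((hytail.norm).inv₀ (norm_ne_zero_iff.mpr hwne)).smul hytail
      exact hlim.congr fun m => (heq m).symm
    have hwnorm : ‖w‖ ≠ 0 := norm_ne_zero_iff.mpr hwne
    refine ⟨‖w‖⁻¹ • w, ⟨?_, x, fun m => ⟨⟨b (m + N), hbA _, rfl⟩,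
      fun hx => hbne m (hinj hx)⟩, hxlim, hxdir⟩, ‖w‖, norm_nonneg _, ?_⟩
    · rw [norm_smul, Real.norm_eq_abs, abs_of_pos
        (inv_pos.mpr (norm_pos_iff.mpr hwne)), inv_mul_cancel₀ hwnorm]
    · rw [smul_inv_smul₀ hwnorm]
  -- conclusion
  refine ⟨f, ⟨hbijf, K, K', hlipf, hantif⟩, flip0, ?_⟩
  rintro _ ⟨w, ⟨a, ha, tv, htv, rfl⟩, rfl⟩
  rcases htv.eq_or_lt with h0 | hpos
  · obtain ⟨d, hd, -⟩ := key a ha 1 one_pos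
    exact ⟨d, hd, 0, le_refl 0, by rw [← h0, zero_smul, flip0, zero_smul]⟩
  · exact key a ha tv hpos

/-- If `A` satisfies (SSP) at `p ∈ closure A` and `h` is a bi-Lipschitz
homeomorphism, then some bi-Lipschitz homeomorphism `h̃` fixing `0` satisfies
`h̃(LD_p(A)) ⊆ LD_{h(p)}(h(A))`. -/
theorem stmt0 {n : ℕ} (A : Set (EuclideanSpace ℝ (Fin n)))
    (p : EuclideanSpace ℝ (Fin n)) (hp : p ∈ closure A)
    (h : EuclideanSpace ℝ (Fin n) → EuclideanSpace ℝ (Fin n))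
    (hh : IsBiLipschitz h) (hssp : SSP A p) :
    ∃ ht : EuclideanSpace ℝ (Fin n) → EuclideanSpace ℝ (Fin n),
      IsBiLipschitz ht ∧ ht 0 = 0 ∧
      ht '' LDir A p ⊆ LDir (h '' A) (h p) :=
  aux A p h hh hssp
end

section
/- Let A ⊆ ℝⁿ with 0 ∈ closure(A), let h : ℝⁿ → ℝⁿ be a bi-Lipschitz homeomorphism with h(0) = 0, and let p_m ∈ closure(A) be a sequence with p_m → 0 such that A satisfies condition (SSP) at every p_m. Assume that the sequences of cones LD_{p_m}(A) and LD_{h(p_m)}(h(A)) converge in the Kuratowski sense to sets L and L′ respectively. Then there exists a bi-Lipschitz homeomorphism h̃ : ℝⁿ → ℝⁿ with h̃(0) = 0 such that h̃(L) ⊆ L′. Moreover, if in addition p_m ∈ A \ {0} for all m, then L′ ⊆ L𝒢D(h(A)). -/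
open Filter Topology Set Asymptotics

variable {E : Type*} [NormedAddCommGroup E] [NormedSpace ℝ E]

/-- Kuratowski convergence of a sequence of subsets of `E` to a limit set. -/
def KuratowskiTendsto (S : ℕ → Set E) (L : Set E) : Prop :=
  L = {x | ∃ u : ℕ → E, (∀ m, u m ∈ S m) ∧ Tendsto u atTop (𝓝 x)} ∧
  L = {x | ∃ φ : ℕ → ℕ, StrictMono φ ∧
        ∃ u : ℕ → E, (∀ k, u k ∈ S (φ k)) ∧ Tendsto u atTop (𝓝 x)}

lemma norm_invnorm_smul {z : E} (hz : z ≠ 0) : ‖‖z‖⁻¹ • z‖ = 1 := by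
  rw [norm_smul, Real.norm_eq_abs, abs_of_nonneg (inv_nonneg.2 (norm_nonneg z)),
    inv_mul_cancel₀ (norm_ne_zero_iff.2 hz)]

lemma invnorm_smul_mem_sphere {z : E} (hz : z ≠ 0) :
    ‖z‖⁻¹ • z ∈ Metric.sphere (0:E) 1 := by
  simp [norm_invnorm_smul hz]

lemma dirSet_image_nonempty [ProperSpace E] {h : E → E} (hc : Continuous h)
    (hinj : Function.Injective h) {A : Set E} {p : E}
    (hne : (dirSet A p).Nonempty) : (dirSet (h '' A) (h p)).Nonempty := by
  obtain ⟨a, -, x, hx, hxp, -⟩ := hne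
  have hxne : ∀ i, h (x i) - h p ≠ 0 := fun i =>
    sub_ne_zero.2 (fun e => (hx i).2 (hinj e))
  have hmem : ∀ i, ‖h (x i) - h p‖⁻¹ • (h (x i) - h p) ∈ Metric.sphere (0:E) 1 :=
    fun i => invnorm_smul_mem_sphere (hxne i)
  obtain ⟨u, hu, φ, hφ, hconv⟩ :=
    (isCompact_sphere (0:E) 1).tendsto_subseq hmem
  refine ⟨u, ?_, fun k => h (x (φ k)), fun k => ⟨⟨x (φ k), (hx (φ k)).1, rfl⟩,
    fun e => (hx (φ k)).2 (hinj e)⟩, ?_, hconv⟩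
  · simpa using hu
  · exact (hc.tendsto p).comp (hxp.comp hφ.tendsto_atTop)

/-- Core SSP transfer lemma. -/
lemma lemA [ProperSpace E] {K K' : NNReal} {h : E → E} (hK : LipschitzWith K h)
    (hK' : AntilipschitzWith K' h) {A : Set E} {p w : E}
    (hssp : SSP A p) (hw : w ∈ LDir A p) {ε : ℝ} (hε : 0 < ε) :
    ∃ δ > 0, ∀ t : ℝ, 0 < t → t < δ →
      ∃ v ∈ LDir (h '' A) (h p), dist (t⁻¹ • (h (p + t • w) - h p)) v < ε := by
  by_contra hcon
  push_neg at hcon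
  have hsel : ∀ i : ℕ, ∃ t : ℝ, 0 < t ∧ t < 1/(i+1) ∧
      ∀ v ∈ LDir (h '' A) (h p), ε ≤ dist (t⁻¹ • (h (p + t • w) - h p)) v := by
    intro i
    obtain ⟨t, ht1, ht2, ht3⟩ := hcon (1/(i+1)) (by positivity)
    exact ⟨t, ht1, ht2, fun v hv => not_lt.1 (fun hlt => absurd (ht3 v hv) (not_le.2 hlt))⟩
  choose t ht0 ht1 htbad using hsel
  have ttend : Tendsto t atTop (𝓝 0) := by
    apply squeeze_zero (fun i => (ht0 i).le) (fun i => (ht1 i).le)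
    exact tendsto_one_div_add_atTop_nhds_zero_nat
  obtain ⟨a, ha, s, hs0, rfl⟩ := hw
  have hinj := hK'.injective
  rcases eq_or_lt_of_le hs0 with hs | hs
  · -- w = 0
    obtain ⟨u, hu⟩ := dirSet_image_nonempty hK.continuous hinj ⟨a, ha⟩
    have h0mem : (0:E) ∈ LDir (h '' A) (h p) :=
      ⟨u, hu, 0, le_refl 0, (zero_smul _ _).symm⟩
    have := htbad 0 0 h0mem
    rw [← hs] at this
    simp at this
    linarith
  · -- s > 0
    have hanorm : ‖a‖ = 1 := ha.1
    have hane : a ≠ 0 := fun e => by simp [e] at hanorm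
    set x : ℕ → E := fun i => p + t i • (s • a) with hxdef
    have hxsub : ∀ i, x i - p = (t i * s) • a := by
      intro i; simp [hxdef, smul_smul]
    have hxnorm : ∀ i, ‖x i - p‖ = t i * s := by
      intro i
      rw [hxsub i, norm_smul, Real.norm_eq_abs, hanorm, mul_one,
        abs_of_pos (mul_pos (ht0 i) hs)]
    have hxne : ∀ i, x i ≠ p := by
      intro i he
      have : ‖x i - p‖ = 0 := by simp [he]
      rw [hxnorm i] at this
      exact absurd this (ne_of_gt (mul_pos (ht0 i) hs))
    have hxtend : Tendsto x atTop (𝓝 p) := by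
      have : Tendsto (fun i => p + t i • (s • a)) atTop (𝓝 (p + (0:ℝ) • (s • a))) :=
        tendsto_const_nhds.add (ttend.smul_const _)
      simpa using this
    have hxdir : (fun i => ‖x i - p‖⁻¹ • (x i - p)) = fun _ => a := by
      funext i
      rw [hxnorm i, hxsub i, smul_smul,
        inv_mul_cancel₀ (ne_of_gt (mul_pos (ht0 i) hs)), one_smul]
    obtain ⟨b, hbA, hT1, hT2⟩ := hssp x hxne hxtend
      ⟨a, ha, by rw [hxdir]; exact tendsto_const_nhds⟩
    -- eventual bounds
    have hEv : ∀ᶠ i in atTop, ‖x i - b i‖ ≤ (1/2) * (t i * s) := by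
      filter_upwards [hT1.eventually (gt_mem_nhds (by norm_num : (0:ℝ) < 1/2))] with i hi
      have hd' : t i * s ≠ 0 := ne_of_gt (mul_pos (ht0 i) hs)
      rw [hxnorm i] at hi
      calc ‖x i - b i‖ = ‖x i - b i‖ / (t i * s) * (t i * s) :=
            (div_mul_cancel₀ _ hd').symm
        _ ≤ 1/2 * (t i * s) :=
            mul_le_mul_of_nonneg_right hi.le (mul_pos (ht0 i) hs).le
    obtain ⟨N, hN⟩ := eventually_atTop.1 hEv
    have hblow : ∀ i, (1/2) * (t (i+N) * s) ≤ ‖b (i+N) - p‖ := by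
      intro i
      have h1 := hN (i+N) (Nat.le_add_left N i)
      have tri : ‖x (i+N) - p‖ ≤ ‖x (i+N) - b (i+N)‖ + ‖b (i+N) - p‖ :=
        norm_sub_le_norm_sub_add_norm_sub _ _ _
      rw [hxnorm (i+N)] at tri
      linarith
    have hbhigh : ∀ i, ‖b (i+N) - p‖ ≤ 2 * (t (i+N) * s) := by
      intro i
      have h1 := hN (i+N) (Nat.le_add_left N i)
      have tri : ‖b (i+N) - p‖ ≤ ‖b (i+N) - x (i+N)‖ + ‖x (i+N) - p‖ :=
        norm_sub_le_norm_sub_add_norm_sub _ _ _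
      rw [hxnorm (i+N), show ‖b (i+N) - x (i+N)‖ = ‖x (i+N) - b (i+N)‖ from
        norm_sub_rev _ _] at tri
      have hp2 := (mul_pos (ht0 (i+N)) hs).le
      linarith
    have hbne : ∀ i, b (i+N) ≠ p := by
      intro i he
      have := hblow i
      rw [he, sub_self, norm_zero] at this
      nlinarith [mul_pos (ht0 (i+N)) hs]
    have hyne : ∀ i, h (b (i+N)) - h p ≠ 0 := fun i =>
      sub_ne_zero.2 (fun e => hbne i (hinj e))
    set d : ℕ → E := fun i => ‖h (b (i+N)) - h p‖⁻¹ • (h (b (i+N)) - h p) with hddef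
    set ρ : ℕ → ℝ := fun i => ‖h (b (i+N)) - h p‖ / t (i+N) with hρdef
    have hpair : ∀ i, (d i, ρ i) ∈ (Metric.sphere (0:E) 1) ×ˢ (Icc (0:ℝ) (2*K*s)) := by
      intro i
      refine ⟨invnorm_smul_mem_sphere (hyne i),
        ⟨div_nonneg (norm_nonneg _) (ht0 _).le, ?_⟩⟩
      have hlip := hK.dist_le_mul (b (i+N)) p
      rw [dist_eq_norm, dist_eq_norm] at hlip
      have hb := hbhigh i
      have ht' := ht0 (i+N)
      rw [hρdef]
      simp only
      rw [div_le_iff₀ ht']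
      calc ‖h (b (i+N)) - h p‖ ≤ K * ‖b (i+N) - p‖ := hlip
        _ ≤ K * (2 * (t (i+N) * s)) :=
            mul_le_mul_of_nonneg_left hb (by positivity)
        _ = 2*K*s * t (i+N) := by ring
    obtain ⟨⟨u, r⟩, ⟨husph, hrmem⟩, φ, hφ, hconv⟩ :=
      ((isCompact_sphere (0:E) 1).prod isCompact_Icc).tendsto_subseq hpair
    have hdt : Tendsto (fun k => d (φ k)) atTop (𝓝 u) :=
      (continuous_fst.tendsto _).comp hconv
    have hrt : Tendsto (fun k => ρ (φ k)) atTop (𝓝 r) :=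
      (continuous_snd.tendsto _).comp hconv
    have hbtend : Tendsto (fun i => b (i+N)) atTop (𝓝 p) := by
      rw [tendsto_iff_dist_tendsto_zero]
      apply squeeze_zero (fun i => dist_nonneg) (fun i => ?_)
      · have h2 : Tendsto (fun i => 2 * (t (i+N) * s)) atTop (𝓝 (2 * (0 * s))) :=
          (((ttend.comp (tendsto_add_atTop_nat N)).mul_const s).const_mul 2)
        simpa using h2
      · rw [dist_eq_norm]; exact hbhigh i
    have humem : u ∈ dirSet (h '' A) (h p) := by
      refine ⟨by simpa using husph, fun k => h (b (φ k + N)), fun k =>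
        ⟨⟨b (φ k + N), hbA _, rfl⟩, fun e => hbne (φ k) (hinj e)⟩, ?_, hdt⟩
      exact (hK.continuous.tendsto p).comp (hbtend.comp hφ.tendsto_atTop)
    have hvmem : r • u ∈ LDir (h '' A) (h p) := ⟨u, humem, r, hrmem.1, rfl⟩
    set c : ℕ → E := fun i => (t i)⁻¹ • (h (p + t i • (s • a)) - h p) with hcdef
    have hsplit : ∀ i, c (i+N) =
        (t (i+N))⁻¹ • (h (x (i+N)) - h (b (i+N))) + ρ i • d i := by
      intro i
      have htne : t (i+N) ≠ 0 := ne_of_gt (ht0 (i+N))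
      have hyn : ‖h (b (i+N)) - h p‖ ≠ 0 := norm_ne_zero_iff.2 (hyne i)
      have e1 : ρ i • d i = (t (i+N))⁻¹ • (h (b (i+N)) - h p) := by
        rw [hρdef, hddef]
        simp only
        rw [smul_smul]
        congr 1
        field_simp
      have e2 : c (i+N) = (t (i+N))⁻¹ • (h (x (i+N)) - h p) := rfl
      rw [e2, e1, ← smul_add, sub_add_sub_cancel]
    have hctend : Tendsto (fun k => c (φ k + N)) atTop (𝓝 (r • u)) := by
      have hA2 : Tendsto (fun k => ρ (φ k) • d (φ k)) atTop (𝓝 (r • u)) :=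
        hrt.smul hdt
      have hA1 : Tendsto
          (fun k => (t (φ k + N))⁻¹ • (h (x (φ k + N)) - h (b (φ k + N))))
          atTop (𝓝 0) := by
        apply squeeze_zero_norm
          (a := fun k => (K * s) * (‖x (φ k + N) - b (φ k + N)‖ / ‖x (φ k + N) - p‖))
        · intro k
          have ht' := ht0 (φ k + N)
          have hlip := hK.dist_le_mul (x (φ k + N)) (b (φ k + N))
          rw [dist_eq_norm, dist_eq_norm] at hlip
          rw [norm_smul, Real.norm_eq_abs, abs_of_pos (inv_pos.2 ht'), hxnorm]
          have heq : (K:ℝ) * s * (‖x (φ k + N) - b (φ k + N)‖ / (t (φ k + N) * s)) =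
              (t (φ k + N))⁻¹ * ((K:ℝ) * ‖x (φ k + N) - b (φ k + N)‖) := by
            field_simp
          rw [heq]
          exact mul_le_mul_of_nonneg_left hlip (inv_pos.2 ht').le
        · have hcomp : Tendsto (fun k => ‖x (φ k + N) - b (φ k + N)‖ / ‖x (φ k + N) - p‖)
              atTop (𝓝 0) :=
            hT1.comp ((tendsto_add_atTop_nat N).comp hφ.tendsto_atTop)
          have := hcomp.const_mul ((K:ℝ) * s)
          simpa using this
      have heq : (fun k => c (φ k + N)) = fun k =>
          (t (φ k + N))⁻¹ • (h (x (φ k + N)) - h (b (φ k + N))) + ρ (φ k) • d (φ k) :=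
        funext fun k => hsplit (φ k)
      rw [heq]
      simpa using hA1.add hA2
    have hev : ∀ᶠ k in atTop, dist (c (φ k + N)) (r • u) < ε :=
      hctend.eventually (by
        have : Metric.ball (r • u) ε ∈ 𝓝 (r • u) := Metric.ball_mem_nhds _ hε
        filter_upwards [this] with z hz using Metric.mem_ball.1 hz)
    obtain ⟨k, hk⟩ := hev.exists
    exact absurd (htbad (φ k + N) (r • u) hvmem) (not_le.2 hk)

lemma rescale_lip {f : E → E} {C : NNReal} (hf : LipschitzWith C f) (q : E)
    {τ : ℝ} (hτ : 0 < τ) (y z : E) :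
    dist (τ⁻¹ • (f (q + τ • y) - f q)) (τ⁻¹ • (f (q + τ • z) - f q)) ≤ C * dist y z := by
  rw [dist_eq_norm, ← smul_sub, sub_sub_sub_cancel_right, norm_smul, Real.norm_eq_abs,
    abs_of_pos (inv_pos.2 hτ), dist_eq_norm]
  have hlip := hf.dist_le_mul (q + τ • y) (q + τ • z)
  rw [dist_eq_norm, dist_eq_norm] at hlip
  have e : q + τ • y - (q + τ • z) = τ • (y - z) := by rw [smul_sub]; abel
  rw [e, norm_smul, Real.norm_eq_abs, abs_of_pos hτ] at hlip
  calc τ⁻¹ * ‖f (q + τ • y) - f (q + τ • z)‖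
      ≤ τ⁻¹ * (C * (τ * ‖y - z‖)) :=
        mul_le_mul_of_nonneg_left hlip (inv_pos.2 hτ).le
    _ = C * ‖y - z‖ := by field_simp

lemma rescale_anti {f : E → E} {C : NNReal} (hf : AntilipschitzWith C f) (q : E)
    {τ : ℝ} (hτ : 0 < τ) (y z : E) :
    dist y z ≤ C * dist (τ⁻¹ • (f (q + τ • y) - f q)) (τ⁻¹ • (f (q + τ • z) - f q)) := by
  rw [dist_eq_norm (τ⁻¹ • (f (q + τ • y) - f q)), ← smul_sub, sub_sub_sub_cancel_right,
    norm_smul, Real.norm_eq_abs, abs_of_pos (inv_pos.2 hτ), dist_eq_norm]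
  have hanti := hf.le_mul_dist (q + τ • y) (q + τ • z)
  rw [dist_eq_norm, dist_eq_norm] at hanti
  have e : q + τ • y - (q + τ • z) = τ • (y - z) := by rw [smul_sub]; abel
  rw [e, norm_smul, Real.norm_eq_abs, abs_of_pos hτ] at hanti
  have h1 : ‖y - z‖ = τ⁻¹ * (τ * ‖y - z‖) := by field_simp
  rw [h1, show (C:ℝ) * (τ⁻¹ * ‖f (q + τ • y) - f (q + τ • z)‖)
      = τ⁻¹ * ((C:ℝ) * ‖f (q + τ • y) - f (q + τ • z)‖) by ring]
  exact mul_le_mul_of_nonneg_left hanti (inv_pos.2 hτ).le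

lemma exists_uniform_delta {P : ℕ → ℝ → Prop}
    (h : ∀ j, ∃ δ > 0, ∀ t : ℝ, 0 < t → t < δ → P j t) :
    ∀ M : ℕ, ∃ δ > 0, ∀ j ≤ M, ∀ t : ℝ, 0 < t → t < δ → P j t := by
  intro M
  induction M with
  | zero =>
      obtain ⟨δ, hδ, hP⟩ := h 0
      exact ⟨δ, hδ, fun j hj => by rw [Nat.le_zero.1 hj]; exact hP⟩
  | succ M ih =>
      obtain ⟨δ1, hδ1, h1⟩ := ih
      obtain ⟨δ2, hδ2, h2⟩ := h (M+1)
      refine ⟨min δ1 δ2, lt_min hδ1 hδ2, fun j hj u hu0 huδ => ?_⟩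
      by_cases hjM : j ≤ M
      · exact h1 j hjM u hu0 (huδ.trans_le (min_le_left _ _))
      · have : j = M + 1 := le_antisymm hj (not_le.1 hjM)
        rw [this]
        exact h2 u hu0 (huδ.trans_le (min_le_right _ _))



theorem stmt1 {n : ℕ} (A : Set (EuclideanSpace ℝ (Fin n)))
    (h0 : (0 : EuclideanSpace ℝ (Fin n)) ∈ closure A)
    (h : EuclideanSpace ℝ (Fin n) → EuclideanSpace ℝ (Fin n))
    (hh : IsBiLipschitz h) (hh0 : h 0 = 0)
    (p : ℕ → EuclideanSpace ℝ (Fin n))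
    (hpA : ∀ m, p m ∈ closure A) (hp0 : Tendsto p atTop (𝓝 0))
    (hssp : ∀ m, SSP A (p m))
    (L L' : Set (EuclideanSpace ℝ (Fin n)))
    (hL : KuratowskiTendsto (fun m => LDir A (p m)) L)
    (hL' : KuratowskiTendsto (fun m => LDir (h '' A) (h (p m))) L') :
    (∃ ht : EuclideanSpace ℝ (Fin n) → EuclideanSpace ℝ (Fin n),
        IsBiLipschitz ht ∧ ht 0 = 0 ∧ ht '' L ⊆ L') ∧
    ((∀ m, p m ∈ A ∧ p m ≠ 0) → L' ⊆ LGDir (h '' A) 0) := by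
  classical
  obtain ⟨hbij, K, K', hK, hK'⟩ := hh
  have hinj : Function.Injective h := hbij.1
  constructor
  · -- Part 1
    by_cases hLne : L.Nonempty
    swap
    · refine ⟨id, ⟨Function.bijective_id, 1, 1, LipschitzWith.id, AntilipschitzWith.id⟩,
        rfl, ?_⟩
      rw [not_nonempty_iff_eq_empty.1 hLne]
      simp
    obtain ⟨w₀, hw₀⟩ := hLne
    have hw₀' : w₀ ∈ {x | ∃ u : ℕ → EuclideanSpace ℝ (Fin n),
        (∀ m, u m ∈ LDir A (p m)) ∧ Tendsto u atTop (𝓝 x)} := by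
      rw [← hL.1]; exact hw₀
    obtain ⟨u₀, hu₀, -⟩ := hw₀'
    have hDne : ∀ m, (dirSet A (p m)).Nonempty := by
      intro m
      obtain ⟨a, haD, -⟩ := hu₀ m
      exact ⟨a, haD⟩
    have hD'ne : ∀ m, (dirSet (h '' A) (h (p m))).Nonempty :=
      fun m => dirSet_image_nonempty hK.continuous hinj (hDne m)
    obtain ⟨e, he⟩ := TopologicalSpace.exists_dense_seq (EuclideanSpace ℝ (Fin n))
    -- approximants of the dense sequence inside the cones
    have hwsel : ∀ m j : ℕ, ∃ v ∈ LDir A (p m),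
        dist (e j) v < Metric.infDist (e j) (LDir A (p m)) + 1/(m+1) := by
      intro m j
      have hne : (LDir A (p m)).Nonempty := ⟨u₀ m, hu₀ m⟩
      exact (Metric.infDist_lt_iff hne).1 (lt_add_of_pos_right _ (by positivity))
    choose wsel hwmem hwd using hwsel
    -- choice of scales t m
    have hts : ∀ m : ℕ, ∃ t : ℝ, 0 < t ∧ t ≤ 1/(m+1) ∧ ∀ j ≤ m,
        ∃ v ∈ LDir (h '' A) (h (p m)),
          dist (t⁻¹ • (h (p m + t • wsel m j) - h (p m))) v < 1/(m+1) := by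
      intro m
      have hδ : ∀ j, ∃ δ > 0, ∀ t : ℝ, 0 < t → t < δ →
          ∃ v ∈ LDir (h '' A) (h (p m)),
            dist (t⁻¹ • (h (p m + t • wsel m j) - h (p m))) v < 1/(m+1) :=
        fun j => lemA hK hK' (hssp m) (hwmem m j) (by positivity)
      obtain ⟨δ, hδ0, hδP⟩ := exists_uniform_delta hδ m
      refine ⟨min (δ/2) (1/(m+1)), lt_min (by positivity) (by positivity),
        min_le_right _ _, fun j hj => hδP j hj _ (lt_min (by positivity) (by positivity))
          (lt_of_le_of_lt (min_le_left _ _) (by linarith))⟩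
    choose t ht0 ht1 htP using hts
    -- the rescaled maps and their inverses
    set H : ℕ → EuclideanSpace ℝ (Fin n) → EuclideanSpace ℝ (Fin n) :=
      fun m z => (t m)⁻¹ • (h (p m + t m • z) - h (p m)) with hHdef
    set hi : EuclideanSpace ℝ (Fin n) → EuclideanSpace ℝ (Fin n) :=
      Function.invFun h with hidef
    have hri : Function.RightInverse hi h := Function.rightInverse_invFun hbij.2
    have hli : Function.LeftInverse hi h := Function.leftInverse_invFun hbij.1
    have hilip : LipschitzWith K' hi := hK'.to_rightInverse hri
    set G : ℕ → EuclideanSpace ℝ (Fin n) → EuclideanSpace ℝ (Fin n) :=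
      fun m z => (t m)⁻¹ • (hi (h (p m) + t m • z) - p m) with hGdef
    have hHG : ∀ m z, H m (G m z) = z := by
      intro m z
      have htne : t m ≠ 0 := ne_of_gt (ht0 m)
      simp only [hHdef, hGdef]
      have e1 : p m + t m • ((t m)⁻¹ • (hi (h (p m) + t m • z) - p m))
          = hi (h (p m) + t m • z) := by
        rw [smul_smul, mul_inv_cancel₀ htne, one_smul]
        abel
      rw [e1, hri _, add_sub_cancel_left, smul_smul, inv_mul_cancel₀ htne, one_smul]
    have hGH : ∀ m z, G m (H m z) = z := by
      intro m z
      have htne : t m ≠ 0 := ne_of_gt (ht0 m)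
      simp only [hHdef, hGdef]
      have e1 : h (p m) + t m • ((t m)⁻¹ • (h (p m + t m • z) - h (p m)))
          = h (p m + t m • z) := by
        rw [smul_smul, mul_inv_cancel₀ htne, one_smul]
        abel
      rw [e1, hli _, add_sub_cancel_left, smul_smul, inv_mul_cancel₀ htne, one_smul]
    have hHlip : ∀ m (y z : EuclideanSpace ℝ (Fin n)),
        dist (H m y) (H m z) ≤ K * dist y z :=
      fun m y z => rescale_lip hK (p m) (ht0 m) y z
    have hHanti : ∀ m (y z : EuclideanSpace ℝ (Fin n)),
        dist y z ≤ K' * dist (H m y) (H m z) :=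
      fun m y z => rescale_anti hK' (p m) (ht0 m) y z
    have hGlip : ∀ m (y z : EuclideanSpace ℝ (Fin n)),
        dist (G m y) (G m z) ≤ K' * dist y z := by
      intro m y z
      have e1 : ∀ w : EuclideanSpace ℝ (Fin n),
          G m w = (t m)⁻¹ • (hi (h (p m) + t m • w) - hi (h (p m))) := by
        intro w; rw [hGdef]; simp only [hli (p m)]
      rw [e1 y, e1 z]
      exact rescale_lip hilip (h (p m)) (ht0 m) y z
    have hH0 : ∀ m, H m 0 = 0 := by
      intro m; simp [hHdef]
    have hG0 : ∀ m, G m 0 = 0 := by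
      intro m; simp [hGdef, hli (p m)]
    have hHb : ∀ m z, ‖H m z‖ ≤ ((K:ℝ) + K') * ‖z‖ := by
      intro m z
      have h1 := hHlip m z 0
      rw [hH0 m, dist_zero_right, dist_zero_right] at h1
      nlinarith [norm_nonneg z, (K':NNReal).coe_nonneg]
    have hGb : ∀ m z, ‖G m z‖ ≤ ((K:ℝ) + K') * ‖z‖ := by
      intro m z
      have h1 := hGlip m z 0
      rw [hG0 m, dist_zero_right, dist_zero_right] at h1
      nlinarith [norm_nonneg z, (K:NNReal).coe_nonneg]
    -- ultrafilter limits
    set U : Ultrafilter ℕ := Ultrafilter.of atTop with hUdef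
    have hUle : (U : Filter ℕ) ≤ atTop := Ultrafilter.of_le atTop
    have hlimex : ∀ (F : ℕ → EuclideanSpace ℝ (Fin n) → EuclideanSpace ℝ (Fin n)),
        (∀ m z, ‖F m z‖ ≤ ((K:ℝ) + K') * ‖z‖) →
        ∀ z, ∃ y, Tendsto (fun m => F m z) (U : Filter ℕ) (𝓝 y) := by
      intro F hF z
      have hle : (U.map (fun m => F m z) : Filter (EuclideanSpace ℝ (Fin n)))
          ≤ 𝓟 (Metric.closedBall (0 : EuclideanSpace ℝ (Fin n)) (((K:ℝ) + K') * ‖z‖)) := by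
        rw [le_principal_iff]
        refine Filter.mem_map.2 (Filter.univ_mem' fun m => ?_)
        simp only [Set.mem_preimage, Metric.mem_closedBall, dist_zero_right]
        exact hF m z
      obtain ⟨y, -, hy⟩ := (isCompact_closedBall
        (0 : EuclideanSpace ℝ (Fin n)) _).ultrafilter_le_nhds _ hle
      exact ⟨y, hy⟩
    choose th htt using hlimex H hHb
    choose tg hgt using hlimex G hGb
    have hth0 : th 0 = 0 := by
      refine tendsto_nhds_unique (htt 0) ?_
      simp only [hH0]
      exact tendsto_const_nhds
    have hthlip : LipschitzWith K th :=
      LipschitzWith.of_dist_le_mul fun y z =>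
        le_of_tendsto ((htt y).dist (htt z)) (Eventually.of_forall fun m => hHlip m y z)
    have hthanti : AntilipschitzWith K' th :=
      AntilipschitzWith.of_le_mul_dist fun y z =>
        ge_of_tendsto (((htt y).dist (htt z)).const_mul (K':ℝ))
          (Eventually.of_forall fun m => hHanti m y z)
    have hgh : ∀ z, tg (th z) = z := by
      intro z
      refine tendsto_nhds_unique (hgt (th z)) ?_
      rw [tendsto_iff_dist_tendsto_zero]
      refine squeeze_zero (g := fun m => (K':ℝ) * dist (th z) (H m z))
        (fun m => dist_nonneg) (fun m => ?_) ?_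
      · have h1 := hGlip m (th z) (H m z)
        rw [hGH m z] at h1
        exact h1
      · have h2 := (Tendsto.dist (tendsto_const_nhds (x := th z)) (htt z)).const_mul ((K':ℝ))
        simpa using h2
    have hhg : ∀ z, th (tg z) = z := by
      intro z
      refine tendsto_nhds_unique (htt (tg z)) ?_
      rw [tendsto_iff_dist_tendsto_zero]
      refine squeeze_zero (g := fun m => (K:ℝ) * dist (tg z) (G m z))
        (fun m => dist_nonneg) (fun m => ?_) ?_
      · have h1 := hHlip m (tg z) (G m z)
        rw [hHG m z] at h1
        exact h1
      · have h2 := (Tendsto.dist (tendsto_const_nhds (x := tg z)) (hgt z)).const_mul ((K:ℝ))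
        simpa using h2
    refine ⟨th, ⟨Function.bijective_iff_has_inverse.2 ⟨tg, hgh, hhg⟩, K, K',
      hthlip, hthanti⟩, hth0, ?_⟩
    -- the image condition
    rintro - ⟨w, hwL, rfl⟩
    have hwS : w ∈ {x | ∃ u : ℕ → EuclideanSpace ℝ (Fin n),
        (∀ m, u m ∈ LDir A (p m)) ∧ Tendsto u atTop (𝓝 x)} := by
      rw [← hL.1]; exact hwL
    obtain ⟨uw, huw, huwt⟩ := hwS
    have keyE : ∀ ε : ℝ, 0 < ε → ∀ᶠ m in atTop,
        ∃ v ∈ LDir (h '' A) (h (p m)), dist (H m w) v < ε := by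
      intro ε hε
      have hK1 : (0:ℝ) < (K:ℝ) + 1 := by positivity
      set δ : ℝ := ε / (4*((K:ℝ)+1)) with hδdef
      have hδ0 : 0 < δ := by positivity
      obtain ⟨j, hj⟩ := Metric.denseRange_iff.1 he w δ hδ0
      have hev1 : ∀ᶠ m in atTop, dist w (uw m) < δ := by
        have h1 := huwt.eventually (Metric.ball_mem_nhds w hδ0)
        filter_upwards [h1] with m hm
        rw [dist_comm]
        exact Metric.mem_ball.1 hm
      have hev2 : ∀ᶠ m : ℕ in atTop, 1/((m:ℝ)+1) < δ :=
        tendsto_one_div_add_atTop_nhds_zero_nat.eventually (gt_mem_nhds hδ0)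
      filter_upwards [hev1, hev2, eventually_ge_atTop j] with m h1 h2 h3
      obtain ⟨v, hvmem, hvd⟩ := htP m j h3
      refine ⟨v, hvmem, ?_⟩
      have hvd' : dist (H m (wsel m j)) v < 1/((m:ℝ)+1) := hvd
      have tri : dist (H m w) v ≤ dist (H m w) (H m (wsel m j)) + dist (H m (wsel m j)) v :=
        dist_triangle _ _ _
      have hH1 : dist (H m w) (H m (wsel m j)) ≤ K * dist w (wsel m j) := hHlip m _ _
      have hinf : Metric.infDist (e j) (LDir A (p m)) ≤ dist (e j) (uw m) :=
        Metric.infDist_le_dist_of_mem (huw m)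
      have hd1 : dist (e j) (uw m) ≤ dist (e j) w + dist w (uw m) := dist_triangle _ _ _
      have hd2 : dist (e j) w = dist w (e j) := dist_comm _ _
      have hd3 := hwd m j
      have hwsel4 : dist w (wsel m j) < 4*δ := by
        have tri2 : dist w (wsel m j) ≤ dist w (e j) + dist (e j) (wsel m j) :=
          dist_triangle _ _ _
        linarith
      have hKd : (K:ℝ) * dist w (wsel m j) ≤ (K:ℝ) * (4*δ) :=
        mul_le_mul_of_nonneg_left hwsel4.le K.coe_nonneg
      have heps : ε = 4*((K:ℝ)+1)*δ := by
        rw [hδdef]; field_simp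
      linarith
    -- turn this into a subsequence membership in L'
    have hfreq : ∀ k : ℕ, ∃ᶠ m in atTop,
        ∃ v ∈ LDir (h '' A) (h (p m)), dist v (th w) < 1/((k:ℝ)+1) := by
      intro k
      set ε : ℝ := 1/(2*((k:ℝ)+1)) with hεdef
      have hε : 0 < ε := by positivity
      have hs1 : ∀ᶠ m in (U : Filter ℕ),
          ∃ v ∈ LDir (h '' A) (h (p m)), dist (H m w) v < ε := hUle (keyE ε hε)
      have hs2 : ∀ᶠ m in (U : Filter ℕ), dist (H m w) (th w) < ε := by
        have h1 := (htt w).eventually (Metric.ball_mem_nhds (th w) hε)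
        filter_upwards [h1] with m hm
        exact Metric.mem_ball.1 hm
      have hs3 : ∀ᶠ m in (U : Filter ℕ),
          ∃ v ∈ LDir (h '' A) (h (p m)), dist v (th w) < 1/((k:ℝ)+1) := by
        filter_upwards [hs1, hs2] with m hm1 hm2
        obtain ⟨v, hv, hvd⟩ := hm1
        refine ⟨v, hv, ?_⟩
        have tri : dist v (th w) ≤ dist v (H m w) + dist (H m w) (th w) :=
          dist_triangle _ _ _
        rw [dist_comm v (H m w)] at tri
        have : ε + ε = 1/((k:ℝ)+1) := by
          rw [hεdef]; field_simp
          norm_num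
        linarith
      by_contra hnot
      rw [Filter.not_frequently] at hnot
      have h4 := hUle hnot
      obtain ⟨m, hm1, hm2⟩ := (hs3.and h4).exists
      exact hm2 hm1
    obtain ⟨φ, hφ, hφP⟩ := Filter.extraction_forall_of_frequently hfreq
    choose v hvmem hvd using hφP
    have hvt : Tendsto v atTop (𝓝 (th w)) := by
      rw [tendsto_iff_dist_tendsto_zero]
      exact squeeze_zero (fun k => dist_nonneg) (fun k => (hvd k).le)
        tendsto_one_div_add_atTop_nhds_zero_nat
    rw [hL'.2]
    exact ⟨φ, hφ, v, hvmem, hvt⟩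
  · -- Part 2
    intro hmem x hx
    have hx' : x ∈ {y | ∃ u : ℕ → EuclideanSpace ℝ (Fin n),
        (∀ m, u m ∈ LDir (h '' A) (h (p m))) ∧ Tendsto u atTop (𝓝 y)} := by
      rw [← hL'.1]; exact hx
    obtain ⟨u, hu, hux⟩ := hx'
    have hsel : ∀ m, ∃ a ∈ dirSet (h '' A) (h (p m)), ∃ s : ℝ, 0 ≤ s ∧ u m = s • a :=
      fun m => hu m
    choose a haD s hs0 hus using hsel
    have hasph : ∀ m, a m ∈ Metric.sphere (0 : EuclideanSpace ℝ (Fin n)) 1 := by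
      intro m
      simp [(haD m).1]
    obtain ⟨α, hαs, φ, hφ, hαt⟩ :=
      (isCompact_sphere (0 : EuclideanSpace ℝ (Fin n)) 1).tendsto_subseq hasph
    have hαmem : α ∈ GDir (h '' A) 0 := by
      refine ⟨by simpa using hαs, fun k => h (p (φ k)),
        fun k => ⟨p (φ k), (hmem (φ k)).1, rfl⟩, ?_, fun k => a (φ k),
        fun k => haD (φ k), hαt⟩
      have h1 : Tendsto (fun k => h (p (φ k))) atTop (𝓝 (h 0)) :=
        (hK.continuous.tendsto 0).comp (hp0.comp hφ.tendsto_atTop)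
      rwa [hh0] at h1
    have hsnorm : ∀ m, s m = ‖u m‖ := by
      intro m
      rw [hus m, norm_smul, Real.norm_eq_abs, (haD m).1, mul_one, abs_of_nonneg (hs0 m)]
    have hst : Tendsto (fun k => s (φ k)) atTop (𝓝 ‖x‖) := by
      simp only [hsnorm]
      exact ((hux.comp hφ.tendsto_atTop)).norm
    have hx2 : x = ‖x‖ • α := by
      refine tendsto_nhds_unique (hux.comp hφ.tendsto_atTop) ?_
      have h1 : Tendsto (fun k => s (φ k) • a (φ k)) atTop (𝓝 (‖x‖ • α)) :=
        hst.smul hαt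
      have h2 : (fun k => u (φ k)) = fun k => s (φ k) • a (φ k) :=
        funext fun k => hus (φ k)
      rw [Function.comp_def, h2]
      exact h1
    exact ⟨α, hαmem, ‖x‖, norm_nonneg x, hx2⟩
end

section
/- Let h : ℝⁿ → ℝⁿ be a bi-Lipschitz homeomorphism with h(0) = 0 and let v ∈ S^{n-1} be such that the limit L := lim_{t→0⁺} h(t·v)/t exists; set l_v := {t·v : t > 0} and c := L/‖L‖, so that D_0(h(l_v)) = {c}. Then: (1) for every sequence b_i → 0 in ℝⁿ with b_i ≠ 0 such that h(b_i)/‖h(b_i)‖ → c, one has b_i/‖b_i‖ → v; (2) the set h(l_v) satisfies condition (SSP) at 0. -/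
open Filter Topology Set Asymptotics

variable {E : Type*} [NormedAddCommGroup E] [NormedSpace ℝ E]

lemma aux_unit_dir {v : E} (hv : ‖v‖ = 1)
    {b : ℕ → E} {s : ℕ → ℝ} (hb : ∀ m, b m ≠ 0) (hs : ∀ m, 0 ≤ s m)
    (h0 : Tendsto (fun m => ‖b m - s m • v‖ / ‖b m‖) atTop (𝓝 0)) :
    Tendsto (fun m => ‖b m‖⁻¹ • b m) atTop (𝓝 v) := by
  rw [tendsto_iff_norm_sub_tendsto_zero]
  refine squeeze_zero (fun m => norm_nonneg _) (fun m => ?_) (by simpa using h0.const_mul 2)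
  have hbm : (0:ℝ) < ‖b m‖ := norm_pos_iff.mpr (hb m)
  have key : ‖b m‖⁻¹ • b m - v
      = ‖b m‖⁻¹ • (b m - s m • v) + ((s m * ‖b m‖⁻¹) - 1) • v := by
    module
  have h1 : |s m - ‖b m‖| ≤ ‖b m - s m • v‖ := by
    have := abs_norm_sub_norm_le (s m • v) (b m)
    rwa [norm_smul, Real.norm_eq_abs, abs_of_nonneg (hs m), hv, mul_one, norm_sub_rev] at this
  have h2 : |s m * ‖b m‖⁻¹ - 1| = |s m - ‖b m‖| * ‖b m‖⁻¹ := by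
    have he : s m * ‖b m‖⁻¹ - 1 = (s m - ‖b m‖) * ‖b m‖⁻¹ := by field_simp
    rw [he, abs_mul, abs_of_pos (inv_pos.mpr hbm)]
  calc ‖‖b m‖⁻¹ • b m - v‖ ≤ ‖‖b m‖⁻¹ • (b m - s m • v)‖ + ‖((s m * ‖b m‖⁻¹) - 1) • v‖ := by
        rw [key]; exact norm_add_le _ _
    _ = ‖b m - s m • v‖ * ‖b m‖⁻¹ + |s m - ‖b m‖| * ‖b m‖⁻¹ := by
        rw [norm_smul, norm_smul, hv, mul_one, norm_inv, norm_norm, Real.norm_eq_abs, h2]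
        ring
    _ ≤ ‖b m - s m • v‖ * ‖b m‖⁻¹ + ‖b m - s m • v‖ * ‖b m‖⁻¹ := by
        gcongr
    _ = 2 * (‖b m - s m • v‖ / ‖b m‖) := by rw [div_eq_mul_inv]; ring

lemma aux_approx (h : E → E) {v : E} {L : E} (hL0 : ‖L‖ ≠ 0)
    (hL : Tendsto (fun t : ℝ => t⁻¹ • h (t • v)) (𝓝[>] (0:ℝ)) (𝓝 L))
    {a : ℕ → E} (ha0 : ∀ m, a m ≠ 0) (haT : Tendsto a atTop (𝓝 0))
    (hac : Tendsto (fun m => ‖a m‖⁻¹ • a m) atTop (𝓝 (‖L‖⁻¹ • L))) :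
    Tendsto (fun m => ‖a m‖⁻¹ • (a m - h ((‖L‖⁻¹ * ‖a m‖) • v))) atTop (𝓝 0) := by
  set s : ℕ → ℝ := fun m => ‖L‖⁻¹ * ‖a m‖ with hs_def
  have hLpos : (0:ℝ) < ‖L‖ := lt_of_le_of_ne (norm_nonneg _) (Ne.symm hL0)
  have hspos : ∀ m, 0 < s m := fun m =>
    mul_pos (inv_pos.mpr hLpos) (norm_pos_iff.mpr (ha0 m))
  have hsT : Tendsto s atTop (𝓝[>] (0:ℝ)) := by
    refine tendsto_nhdsWithin_iff.mpr ⟨?_, Eventually.of_forall (fun m => hspos m)⟩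
    have := (haT.norm).const_mul (‖L‖⁻¹)
    simpa using this
  have hcomp : Tendsto (fun m => (s m)⁻¹ • h (s m • v)) atTop (𝓝 L) := hL.comp hsT
  have heq : ∀ m, ‖a m‖⁻¹ • (a m - h (s m • v))
      = ‖a m‖⁻¹ • a m - ‖L‖⁻¹ • ((s m)⁻¹ • h (s m • v)) := by
    intro m
    have ham : ‖a m‖ ≠ 0 := (norm_pos_iff.mpr (ha0 m)).ne'
    rw [smul_sub, smul_smul]
    congr 2
    rw [hs_def]
    field_simp
  have := hac.sub (hcomp.const_smul (‖L‖⁻¹))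
  rw [sub_self] at this
  exact (tendsto_congr heq).mpr this

theorem stmt4 {n : ℕ}
    (h : EuclideanSpace ℝ (Fin n) → EuclideanSpace ℝ (Fin n))
    (hh : IsBiLipschitz h) (hh0 : h 0 = 0)
    (v : EuclideanSpace ℝ (Fin n)) (hv : ‖v‖ = 1)
    (L : EuclideanSpace ℝ (Fin n))
    (hL : Tendsto (fun t : ℝ => t⁻¹ • h (t • v)) (𝓝[>] (0 : ℝ)) (𝓝 L)) :
    -- (1): any sequence whose image induces the direction `c = L/‖L‖` induces the direction `v`
    (∀ b : ℕ → EuclideanSpace ℝ (Fin n), (∀ i, b i ≠ 0) → Tendsto b atTop (𝓝 0) →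
      Tendsto (fun i => ‖h (b i)‖⁻¹ • h (b i)) atTop (𝓝 (‖L‖⁻¹ • L)) →
      Tendsto (fun i => ‖b i‖⁻¹ • b i) atTop (𝓝 v)) ∧
    -- (2): `h(l_v)` satisfies (SSP) at `0`
    SSP (h '' {x | ∃ t : ℝ, 0 < t ∧ x = t • v}) 0 := by
  obtain ⟨hbij, K, K', hK, hK'⟩ := hh
  -- K' > 0
  have hK'pos : (0:ℝ) < (K' : ℝ) := by
    have h1 : dist v 0 ≤ (K' : ℝ) * dist (h v) (h 0) := hK'.le_mul_dist v 0
    rw [dist_zero_right, hv] at h1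
    by_contra hcon
    push_neg at hcon
    have : (K' : ℝ) = 0 := le_antisymm hcon K'.coe_nonneg
    rw [this, zero_mul] at h1
    linarith
  -- lower bound for ‖h x‖
  have hlow : ∀ x : EuclideanSpace ℝ (Fin n), ‖x‖ ≤ (K' : ℝ) * ‖h x‖ := by
    intro x
    have := hK'.le_mul_dist x 0
    rwa [dist_zero_right, hh0, dist_zero_right] at this
  -- ‖L‖ > 0
  have hLpos : (0:ℝ) < ‖L‖ := by
    have hbound : ∀ t ∈ Ioi (0:ℝ), (K' : ℝ)⁻¹ ≤ ‖t⁻¹ • h (t • v)‖ := by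
      intro t ht
      have htpos : (0:ℝ) < t := ht
      have h1 : ‖t • v‖ ≤ (K' : ℝ) * ‖h (t • v)‖ := hlow _
      rw [norm_smul, Real.norm_eq_abs, abs_of_pos htpos, hv, mul_one] at h1
      rw [norm_smul, Real.norm_eq_abs, abs_of_pos (inv_pos.mpr htpos)]
      rw [inv_le_iff_one_le_mul₀ hK'pos]
      calc (1:ℝ) = t⁻¹ * t := (inv_mul_cancel₀ htpos.ne').symm
        _ ≤ t⁻¹ * ((K' : ℝ) * ‖h (t • v)‖) := by gcongr
        _ = t⁻¹ * ‖h (t • v)‖ * (K' : ℝ) := by ring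
    have := ge_of_tendsto hL.norm (eventually_nhdsWithin_of_forall hbound)
    exact lt_of_lt_of_le (inv_pos.mpr hK'pos) this
  have hLne : ‖L‖ ≠ 0 := hLpos.ne'
  have hinj := hbij.1
  have hne0 : ∀ x : EuclideanSpace ℝ (Fin n), x ≠ 0 → h x ≠ 0 := by
    intro x hx hx'
    exact hx (hinj (hx'.trans hh0.symm))
  constructor
  · -- Part (1)
    intro b hb0 hbT hbc
    have hhb0 : ∀ i, h (b i) ≠ 0 := fun i => hne0 _ (hb0 i)
    have hhbT : Tendsto (fun i => h (b i)) atTop (𝓝 0) := by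
      have := (hK.continuous.tendsto 0).comp hbT
      rwa [hh0] at this
    have hA := aux_approx h hLne hL hhb0 hhbT hbc
    set s : ℕ → ℝ := fun i => ‖L‖⁻¹ * ‖h (b i)‖ with hs_def
    have hspos : ∀ i, 0 < s i := fun i =>
      mul_pos (inv_pos.mpr hLpos) (norm_pos_iff.mpr (hhb0 i))
    have hdiv : Tendsto (fun i => ‖b i - s i • v‖ / ‖b i‖) atTop (𝓝 0) := by
      refine squeeze_zero (fun i => by positivity) (fun i => ?_)
        (by simpa using (hA.norm.const_mul ((K':ℝ) * K)))
      have hbi : (0:ℝ) < ‖b i‖ := norm_pos_iff.mpr (hb0 i)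
      have hHi : (0:ℝ) < ‖h (b i)‖ := norm_pos_iff.mpr (hhb0 i)
      have h1 : ‖b i - s i • v‖ ≤ (K':ℝ) * ‖h (b i) - h (s i • v)‖ := by
        have := hK'.le_mul_dist (b i) (s i • v)
        rwa [dist_eq_norm, dist_eq_norm] at this
      have h2 : ‖h (b i)‖ ≤ (K:ℝ) * ‖b i‖ := by
        have := hK.dist_le_mul (b i) 0
        rwa [dist_zero_right, hh0, dist_zero_right] at this
      have hnorm : ‖‖h (b i)‖⁻¹ • (h (b i) - h (s i • v))‖
          = ‖h (b i) - h (s i • v)‖ / ‖h (b i)‖ := by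
        rw [norm_smul, norm_inv, norm_norm, inv_mul_eq_div]
      rw [hnorm, ← mul_div_assoc, div_le_div_iff₀ hbi hHi]
      calc ‖b i - s i • v‖ * ‖h (b i)‖ ≤ ((K':ℝ) * ‖h (b i) - h (s i • v)‖) * ((K:ℝ) * ‖b i‖) :=
            mul_le_mul h1 h2 (norm_nonneg _) (by positivity)
        _ = (K':ℝ) * (K:ℝ) * ‖h (b i) - h (s i • v)‖ * ‖b i‖ := by ring
    exact aux_unit_dir hv hb0 (fun i => (hspos i).le) hdiv
  · -- Part (2)
    rintro a ha0 haT ⟨d, hd, hdT⟩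
    simp only [sub_zero] at hdT
    -- show d = c
    obtain ⟨-, x, hx, hxT, hxdir⟩ := hd
    simp only [sub_zero] at hxdir
    have hxt : ∀ i, ∃ t : ℝ, 0 < t ∧ x i = h (t • v) := by
      intro i
      obtain ⟨w, ⟨t, ht, rfl⟩, hw⟩ := (hx i).1
      exact ⟨t, ht, hw.symm⟩
    choose t htpos hxeq using hxt
    have htT : Tendsto t atTop (𝓝 0) := by
      refine squeeze_zero (fun i => (htpos i).le) (fun i => ?_)
        (by simpa using hxT.norm.const_mul (K':ℝ))
      have := hlow (t i • v)
      rw [norm_smul, Real.norm_eq_abs, abs_of_pos (htpos i), hv, mul_one, ← hxeq i] at this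
      exact this
    have htT' : Tendsto t atTop (𝓝[>] (0:ℝ)) :=
      tendsto_nhdsWithin_iff.mpr ⟨htT, Eventually.of_forall htpos⟩
    have hxL : Tendsto (fun i => (t i)⁻¹ • x i) atTop (𝓝 L) := by
      have h0' := hL.comp htT'
      have heq : (fun i => (t i)⁻¹ • x i) = (fun u : ℝ => u⁻¹ • h (u • v)) ∘ t := by
        funext i
        simp [Function.comp, hxeq i]
      rw [heq]
      exact h0'
    have hdir2 : Tendsto (fun i => ‖x i‖⁻¹ • x i) atTop (𝓝 (‖L‖⁻¹ • L)) := by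
      have h1 : Tendsto (fun i => ‖(t i)⁻¹ • x i‖⁻¹ • ((t i)⁻¹ • x i)) atTop
          (𝓝 (‖L‖⁻¹ • L)) := ((hxL.norm).inv₀ hLne).smul hxL
      convert h1 using 2 with i
      rw [smul_smul, norm_smul, Real.norm_eq_abs, abs_of_pos (inv_pos.mpr (htpos i))]
      congr 1
      have hxi : ‖x i‖ ≠ 0 := norm_ne_zero_iff.mpr (hx i).2
      field_simp
      exact (div_self (htpos i).ne').symm
    have hdc : d = ‖L‖⁻¹ • L := tendsto_nhds_unique hxdir hdir2
    rw [hdc] at hdT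
    -- build b
    have hA := aux_approx h hLne hL ha0 haT hdT
    set s : ℕ → ℝ := fun m => ‖L‖⁻¹ * ‖a m‖ with hs_def
    have hspos : ∀ m, 0 < s m := fun m =>
      mul_pos (inv_pos.mpr hLpos) (norm_pos_iff.mpr (ha0 m))
    have hdivA : Tendsto (fun m => ‖a m - h (s m • v)‖ / ‖a m‖) atTop (𝓝 0) := by
      have h' := hA.norm
      rw [norm_zero] at h'
      refine h'.congr (fun m => ?_)
      rw [norm_smul, norm_inv, norm_norm, inv_mul_eq_div]
    refine ⟨fun m => h (s m • v), fun m => ⟨s m • v, ⟨s m, hspos m, rfl⟩, rfl⟩, ?_, ?_⟩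
    · simpa only [sub_zero] using hdivA
    · simp only [sub_zero]
      refine squeeze_zero (fun m => by positivity) (fun m => ?_)
        (by simpa using hdivA.const_mul ((K':ℝ) * ‖L‖))
      have ham : (0:ℝ) < ‖a m‖ := norm_pos_iff.mpr (ha0 m)
      have hbm : (0:ℝ) < ‖h (s m • v)‖ := by
        apply norm_pos_iff.mpr
        apply hne0
        apply smul_ne_zero (hspos m).ne'
        intro hv0
        rw [hv0, norm_zero] at hv
        exact one_ne_zero hv.symm
      have h1 : s m ≤ (K':ℝ) * ‖h (s m • v)‖ := by
        have := hlow (s m • v)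
        rwa [norm_smul, Real.norm_eq_abs, abs_of_pos (hspos m), hv, mul_one] at this
      have h2 : ‖a m‖ = ‖L‖ * s m := by
        rw [hs_def]
        field_simp
      rw [← mul_div_assoc, div_le_div_iff₀ hbm ham]
      calc ‖a m - h (s m • v)‖ * ‖a m‖ = ‖a m - h (s m • v)‖ * (‖L‖ * s m) := by rw [h2]
        _ ≤ ‖a m - h (s m • v)‖ * (‖L‖ * ((K':ℝ) * ‖h (s m • v)‖)) := by
            gcongr
        _ = (K':ℝ) * ‖L‖ * ‖a m - h (s m • v)‖ * ‖h (s m • v)‖ := by ring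
end

section
/- Let A ⊆ ℝⁿ with 0 ∈ closure(A) and let h : ℝⁿ → ℝⁿ be a bi-Lipschitz homeomorphism with h(0) = 0 such that for every v ∈ D(A) the limit lim_{t→0⁺} h(t·v)/t exists. If A satisfies condition (SSP) at 0, then h(A) satisfies condition (SSP) at 0. -/
open Filter Topology Set Asymptotics

variable {E : Type*} [NormedAddCommGroup E] [NormedSpace ℝ E]

set_option maxHeartbeats 1000000 in
theorem stmt5 {n : ℕ} (A : Set (EuclideanSpace ℝ (Fin n)))
    (h0 : (0 : EuclideanSpace ℝ (Fin n)) ∈ closure A)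
    (h : EuclideanSpace ℝ (Fin n) → EuclideanSpace ℝ (Fin n))
    (hh : IsBiLipschitz h) (hh0 : h 0 = 0)
    (hlim : ∀ v ∈ dirSet A 0, ∃ L : EuclideanSpace ℝ (Fin n),
      Tendsto (fun t : ℝ => t⁻¹ • h (t • v)) (𝓝[>] (0 : ℝ)) (𝓝 L))
    (hssp : SSP A 0) :
    SSP (h '' A) 0 := by
  obtain ⟨hbij, K, K', hK, hK'⟩ := hh
  intro a hane ha0 hdir
  obtain ⟨d, hd, hdd⟩ := hdir
  simp only [sub_zero] at hdd ⊢
  obtain ⟨hd1, x, hx, hx0, hxd⟩ := hd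
  simp only [sub_zero] at hxd
  choose y hyA hyx using fun i => (hx i).1
  have hyne : ∀ i, y i ≠ 0 := fun i e => (hx i).2 (by rw [← hyx i, e, hh0])
  have hynorm : ∀ i, (0:ℝ) < ‖y i‖ := fun i => norm_pos_iff.2 (hyne i)
  have hy0 : Tendsto y atTop (𝓝 0) := by
    apply squeeze_zero_norm (a := fun i => (K':ℝ) * ‖x i‖)
    · intro i
      calc ‖y i‖ = dist (y i) 0 := (dist_zero_right _).symm
        _ ≤ K' * dist (h (y i)) (h 0) := hK'.le_mul_dist _ _
        _ = K' * ‖x i‖ := by rw [hyx, hh0, dist_zero_right]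
    · simpa using (hx0.norm).const_mul (K':ℝ)
  set u : ℕ → EuclideanSpace ℝ (Fin n) := fun i => ‖y i‖⁻¹ • y i with hu
  have hu1 : ∀ i, u i ∈ Metric.sphere (0 : EuclideanSpace ℝ (Fin n)) 1 := by
    intro i
    have : ‖u i‖ = 1 := by
      rw [hu]
      simp only
      rw [norm_smul, norm_inv, norm_norm, inv_mul_cancel₀ (ne_of_gt (hynorm i))]
    simpa [mem_sphere_zero_iff_norm] using this
  obtain ⟨v, hvs, φ, hφ, huv⟩ :=
    (isCompact_sphere (0 : EuclideanSpace ℝ (Fin n)) 1).tendsto_subseq hu1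
  have hv1 : ‖v‖ = 1 := mem_sphere_zero_iff_norm.1 hvs
  have hvD : v ∈ dirSet A 0 := by
    refine ⟨hv1, y ∘ φ, fun i => ⟨hyA _, hyne _⟩, hy0.comp hφ.tendsto_atTop, ?_⟩
    simpa [Function.comp_def, sub_zero, hu] using huv
  obtain ⟨L, hL⟩ := hlim v hvD
  set t : ℕ → ℝ := fun i => ‖y (φ i)‖ with htdef
  have htpos : ∀ i, 0 < t i := fun i => hynorm _
  have ht0 : Tendsto t atTop (𝓝 0) := by
    simpa using (hy0.comp hφ.tendsto_atTop).norm
  have htW : Tendsto t atTop (𝓝[>] (0:ℝ)) :=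
    tendsto_nhdsWithin_of_tendsto_nhds_of_eventually_within _ ht0
      (Eventually.of_forall fun i => htpos i)
  have hLcomp : Tendsto (fun i => (t i)⁻¹ • h (t i • v)) atTop (𝓝 L) := hL.comp htW
  have hyu : ∀ i, t i • (u (φ i)) = y (φ i) := fun i =>
    smul_inv_smul₀ (ne_of_gt (htpos i)) _
  have hdiff : Tendsto (fun i => (t i)⁻¹ • x (φ i) - (t i)⁻¹ • h (t i • v)) atTop (𝓝 0) := by
    apply squeeze_zero_norm (a := fun i => (K:ℝ) * ‖u (φ i) - v‖)
    · intro i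
      have e1 : (t i)⁻¹ • x (φ i) - (t i)⁻¹ • h (t i • v)
          = (t i)⁻¹ • (h (y (φ i)) - h (t i • v)) := by
        rw [smul_sub, hyx]
      rw [e1, norm_smul, norm_inv, Real.norm_of_nonneg (htpos i).le]
      have e2 : ‖h (y (φ i)) - h (t i • v)‖ ≤ K * ‖y (φ i) - t i • v‖ := by
        simpa [dist_eq_norm] using hK.dist_le_mul (y (φ i)) (t i • v)
      have e3 : ‖y (φ i) - t i • v‖ = t i * ‖u (φ i) - v‖ := by
        rw [← hyu i, ← smul_sub, norm_smul, Real.norm_of_nonneg (htpos i).le]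
      calc (t i)⁻¹ * ‖h (y (φ i)) - h (t i • v)‖
          ≤ (t i)⁻¹ * (K * (t i * ‖u (φ i) - v‖)) := by
            apply mul_le_mul_of_nonneg_left _ (inv_nonneg.2 (htpos i).le)
            rw [← e3]; exact e2
        _ = (K:ℝ) * ‖u (φ i) - v‖ := by
            have htne : t i ≠ 0 := ne_of_gt (htpos i)
            field_simp
    · have h5 : Tendsto (fun i => u (φ i) - v) atTop (𝓝 0) := by
        simpa using huv.sub_const v
      simpa using h5.norm.const_mul (K:ℝ)
  have hxL : Tendsto (fun i => (t i)⁻¹ • x (φ i)) atTop (𝓝 L) := by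
    have := hdiff.add hLcomp
    simpa using this
  have hxne : ∀ i, x (φ i) ≠ 0 := fun i => (hx (φ i)).2
  have hxnormpos : ∀ i, (0:ℝ) < ‖x (φ i)‖ := fun i => norm_pos_iff.2 (hxne i)
  have hnormL : Tendsto (fun i => (t i)⁻¹ * ‖x (φ i)‖) atTop (𝓝 ‖L‖) := by
    refine hxL.norm.congr fun i => ?_
    rw [norm_smul, norm_inv, Real.norm_of_nonneg (htpos i).le]
  have hLd : L = ‖L‖ • d := by
    have h2 : Tendsto (fun i => ((t i)⁻¹ * ‖x (φ i)‖) • (‖x (φ i)‖⁻¹ • x (φ i)))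
        atTop (𝓝 (‖L‖ • d)) := hnormL.smul (hxd.comp hφ.tendsto_atTop)
    have h3 : Tendsto (fun i => (t i)⁻¹ • x (φ i)) atTop (𝓝 (‖L‖ • d)) := by
      refine h2.congr fun i => ?_
      rw [smul_smul, mul_assoc, mul_inv_cancel₀ (ne_of_gt (hxnormpos i)), mul_one]
    exact tendsto_nhds_unique hxL h3
  have hL1 : (1:ℝ) ≤ K' * ‖L‖ := by
    have hlim2 : Tendsto (fun i => (K':ℝ) * ‖(t i)⁻¹ • h (t i • v)‖) atTop
        (𝓝 (K' * ‖L‖)) := hLcomp.norm.const_mul _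
    refine ge_of_tendsto' hlim2 fun i => ?_
    have hA : t i ≤ K' * ‖h (t i • v)‖ := by
      have h4 := hK'.le_mul_dist (t i • v) 0
      rw [hh0] at h4
      simpa [dist_zero_right, norm_smul, Real.norm_of_nonneg (htpos i).le, hv1] using h4
    have h5 : ‖(t i)⁻¹ • h (t i • v)‖ = (t i)⁻¹ * ‖h (t i • v)‖ := by
      rw [norm_smul, norm_inv, Real.norm_of_nonneg (htpos i).le]
    rw [h5]
    have h7 := mul_le_mul_of_nonneg_right hA (inv_pos.2 (htpos i)).le
    rw [mul_inv_cancel₀ (ne_of_gt (htpos i))] at h7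
    calc (1:ℝ) ≤ K' * ‖h (t i • v)‖ * (t i)⁻¹ := h7
      _ = K' * ((t i)⁻¹ * ‖h (t i • v)‖) := by ring
  have hLpos : (0:ℝ) < ‖L‖ := by
    rcases (norm_nonneg L).lt_or_eq with hp | hp
    · exact hp
    · rw [← hp, mul_zero] at hL1; linarith
  have hapos : ∀ m, (0:ℝ) < ‖a m‖ := fun m => norm_pos_iff.2 (hane m)
  set s : ℕ → ℝ := fun m => ‖a m‖ / ‖L‖ with hsdef
  have hspos : ∀ m, 0 < s m := fun m => div_pos (hapos m) hLpos
  have hs0 : Tendsto s atTop (𝓝 0) := by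
    simpa using (ha0.norm).div_const ‖L‖
  have hsW : Tendsto s atTop (𝓝[>] (0:ℝ)) :=
    tendsto_nhdsWithin_of_tendsto_nhds_of_eventually_within _ hs0
      (Eventually.of_forall fun m => hspos m)
  obtain ⟨b', hb'A, hb'1, -⟩ := hssp (fun m => s m • v)
    (fun m => by
      simp only [ne_eq, smul_eq_zero, not_or]
      exact ⟨ne_of_gt (hspos m), fun e => by simp [e] at hv1⟩)
    (by simpa using hs0.smul_const v)
    ⟨v, hvD, by
      refine tendsto_const_nhds.congr fun m => ?_
      have : ‖s m • v - 0‖⁻¹ • (s m • v - 0) = v := by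
        rw [sub_zero, norm_smul, Real.norm_of_nonneg (hspos m).le, hv1, mul_one,
          inv_smul_smul₀ (ne_of_gt (hspos m))]
      exact this.symm⟩
  simp only [sub_zero] at hb'1
  have hb'q : ∀ m, ‖s m • v‖ = s m := fun m => by
    rw [norm_smul, Real.norm_of_nonneg (hspos m).le, hv1, mul_one]
  set b : ℕ → EuclideanSpace ℝ (Fin n) := fun m => h (b' m) with hbdef
  have hsL : ∀ m, s m • L = ‖a m‖ • d := by
    intro m
    rw [hLd, smul_smul]
    congr 1
    simp only [hsdef]
    rw [div_mul_cancel₀ _ (ne_of_gt hLpos)]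
  have hρ : Tendsto (fun m => ‖a m - b m‖ / ‖a m‖) atTop (𝓝 0) := by
    have P1 : Tendsto (fun m => ‖‖a m‖⁻¹ • a m - d‖) atTop (𝓝 0) := by
      simpa using (hdd.sub_const d).norm
    have P2 : Tendsto (fun m => ‖L‖⁻¹ * ‖L - (s m)⁻¹ • h (s m • v)‖) atTop (𝓝 0) := by
      have h6 := ((tendsto_const_nhds (x := L) (f := atTop)).sub (hL.comp hsW)).norm
      simpa using h6.const_mul ‖L‖⁻¹
    have P3 : Tendsto (fun m => ((K:ℝ) * ‖L‖⁻¹) * (‖s m • v - b' m‖ / ‖s m • v‖))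
        atTop (𝓝 0) := by
      simpa using hb'1.const_mul ((K:ℝ) * ‖L‖⁻¹)
    refine squeeze_zero (g := fun m => ‖‖a m‖⁻¹ • a m - d‖
        + ‖L‖⁻¹ * ‖L - (s m)⁻¹ • h (s m • v)‖
        + ((K:ℝ) * ‖L‖⁻¹) * (‖s m • v - b' m‖ / ‖s m • v‖))
      (fun m => div_nonneg (norm_nonneg _) (norm_nonneg _)) (fun m => ?_)
      (by simpa using (P1.add P2).add P3)
    rw [div_le_iff₀ (hapos m)]
    have key1 : a m - b m = (a m - ‖a m‖ • d) + (‖a m‖ • d - h (s m • v))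
        + (h (s m • v) - b m) := by abel
    have T1 : ‖a m - ‖a m‖ • d‖ = ‖a m‖ * ‖‖a m‖⁻¹ • a m - d‖ := by
      have e : ‖a m‖ • (‖a m‖⁻¹ • a m - d) = a m - ‖a m‖ • d := by
        rw [smul_sub, smul_inv_smul₀ (ne_of_gt (hapos m))]
      rw [← e, norm_smul, Real.norm_of_nonneg (norm_nonneg _)]
    have T2 : ‖‖a m‖ • d - h (s m • v)‖
        = ‖a m‖ * (‖L‖⁻¹ * ‖L - (s m)⁻¹ • h (s m • v)‖) := by
      have e1 : s m • (L - (s m)⁻¹ • h (s m • v)) = ‖a m‖ • d - h (s m • v) := by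
        rw [smul_sub, smul_inv_smul₀ (ne_of_gt (hspos m)), hsL]
      rw [← e1, norm_smul, Real.norm_of_nonneg (hspos m).le]
      have e2 : s m = ‖a m‖ * ‖L‖⁻¹ := by simp only [hsdef]; rw [div_eq_mul_inv]
      rw [e2, mul_assoc]
    have T3 : ‖h (s m • v) - b m‖
        ≤ ‖a m‖ * (((K:ℝ) * ‖L‖⁻¹) * (‖s m • v - b' m‖ / ‖s m • v‖)) := by
      have e2 : ‖h (s m • v) - b m‖ ≤ K * ‖s m • v - b' m‖ := by
        simpa [hbdef, dist_eq_norm] using hK.dist_le_mul (s m • v) (b' m)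
      refine e2.trans (le_of_eq ?_)
      rw [hb'q m]
      have e3 : s m = ‖a m‖ / ‖L‖ := by simp only [hsdef]
      rw [e3]
      have hLne : ‖L‖ ≠ 0 := ne_of_gt hLpos
      have hane' : ‖a m‖ ≠ 0 := ne_of_gt (hapos m)
      field_simp
    calc ‖a m - b m‖
        ≤ ‖a m - ‖a m‖ • d‖ + ‖‖a m‖ • d - h (s m • v)‖ + ‖h (s m • v) - b m‖ := by
          rw [key1]; exact norm_add₃_le
      _ ≤ ‖a m‖ * ‖‖a m‖⁻¹ • a m - d‖
          + ‖a m‖ * (‖L‖⁻¹ * ‖L - (s m)⁻¹ • h (s m • v)‖)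
          + ‖a m‖ * (((K:ℝ) * ‖L‖⁻¹) * (‖s m • v - b' m‖ / ‖s m • v‖)) := by
          rw [T1, T2]; exact add_le_add_right T3 _
      _ = (‖‖a m‖⁻¹ • a m - d‖ + ‖L‖⁻¹ * ‖L - (s m)⁻¹ • h (s m • v)‖
          + ((K:ℝ) * ‖L‖⁻¹) * (‖s m • v - b' m‖ / ‖s m • v‖)) * ‖a m‖ := by ring
  refine ⟨b, fun m => ⟨b' m, hb'A m, rfl⟩, hρ, ?_⟩
  have hE : ∀ᶠ m in atTop, ‖a m - b m‖ / ‖a m‖ < 1/2 :=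
    hρ.eventually (eventually_lt_nhds (by norm_num))
  refine squeeze_zero' (Eventually.of_forall fun m => div_nonneg (norm_nonneg _) (norm_nonneg _))
    (hE.mono fun m hm => ?_) (by simpa using hρ.const_mul (2:ℝ))
  have hC : ‖a m - b m‖ < ‖a m‖ / 2 := by
    rw [div_lt_iff₀ (hapos m)] at hm; linarith
  have hB : ‖a m‖ / 2 ≤ ‖b m‖ := by
    have := norm_sub_norm_le (a m) (b m)
    linarith
  have hBpos : 0 < ‖b m‖ := lt_of_lt_of_le (by linarith [hapos m]) hB
  rw [show (2:ℝ) * (‖a m - b m‖ / ‖a m‖) = (2 * ‖a m - b m‖) / ‖a m‖ by ring,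
    div_le_div_iff₀ hBpos (hapos m)]
  nlinarith [norm_nonneg (a m - b m), mul_nonneg (norm_nonneg (a m - b m))
    (by linarith : (0:ℝ) ≤ 2*‖b m‖ - ‖a m‖)]
end

section
/- Let A ⊆ ℝⁿ with 0 ∈ closure(A) and let h : ℝⁿ → ℝⁿ be a bi-Lipschitz homeomorphism with h(0) = 0 such that for every v ∈ D(A) the limit dh(v) := lim_{t→0⁺} h(t·v)/t exists. If A satisfies condition (SSP) at 0, then LD(h(A)) = LD(h(LD(A))) = {s · dh(v) : v ∈ D(A), s ≥ 0}. -/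
open Filter Topology Set Asymptotics

variable {E : Type*} [NormedAddCommGroup E] [NormedSpace ℝ E]

namespace Stmt6Aux

lemma norm_normalize {z : E} (hz : z ≠ 0) : ‖‖z‖⁻¹ • z‖ = 1 := by
  rw [norm_smul, Real.norm_eq_abs, abs_of_pos (inv_pos.2 (norm_pos_iff.2 hz)),
    inv_mul_cancel₀ (norm_ne_zero_iff.2 hz)]

lemma normalize_smul {s : ℝ} (hs : 0 < s) (z : E) :
    ‖s • z‖⁻¹ • (s • z) = ‖z‖⁻¹ • z := by
  rcases eq_or_ne z 0 with rfl | hz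
  · simp
  rw [norm_smul, Real.norm_eq_abs, abs_of_pos hs, mul_inv, smul_smul]
  congr 1
  rw [mul_comm s⁻¹, mul_assoc, inv_mul_cancel₀ hs.ne', mul_one]

lemma ratio_rewrite {t : ℝ} (ht : 0 < t) (x v : E) :
    ‖x - t • v‖ / t = ‖t⁻¹ • x - v‖ := by
  have hsub : t⁻¹ • (x - t • v) = t⁻¹ • x - v := by
    rw [smul_sub, smul_smul, inv_mul_cancel₀ ht.ne', one_smul]
  conv_rhs => rw [← hsub]
  rw [norm_smul, Real.norm_eq_abs, abs_of_pos (inv_pos.2 ht), inv_mul_eq_div]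

lemma mem_dirSet_of_eventually {A : Set E} {p a : E} (ha : ‖a‖ = 1) (x : ℕ → E)
    (hx : ∀ᶠ i in atTop, x i ∈ A ∧ x i ≠ p) (h1 : Tendsto x atTop (𝓝 p))
    (h2 : Tendsto (fun i => ‖x i - p‖⁻¹ • (x i - p)) atTop (𝓝 a)) :
    a ∈ dirSet A p := by
  obtain ⟨N, hN⟩ := eventually_atTop.1 hx
  refine ⟨ha, fun i => x (i + N), fun i => hN _ (Nat.le_add_left N i), ?_, ?_⟩
  · exact h1.comp (tendsto_add_atTop_nat N)
  · exact h2.comp (tendsto_add_atTop_nat N)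

/-- Key limit lemma: if `b m = t m • v + o(t m)` with `t m → 0+`, then
`(t m)⁻¹ • h (b m) → L` where `L` is the directional limit of `h` along `v`. -/
lemma aux_limits {h : E → E} {K : NNReal} (hK : LipschitzWith K h)
    {v L : E} (hL : L ≠ 0)
    (hdhv : Tendsto (fun t : ℝ => t⁻¹ • h (t • v)) (𝓝[>] (0:ℝ)) (𝓝 L))
    {t : ℕ → ℝ} (ht : ∀ m, 0 < t m) (ht0 : Tendsto t atTop (𝓝 0))
    {b : ℕ → E} (hb : Tendsto (fun m => ‖b m - t m • v‖ / t m) atTop (𝓝 0)) :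
    Tendsto (fun m => h (b m)) atTop (𝓝 0) ∧
    (∀ᶠ m in atTop, h (b m) ≠ 0) ∧
    Tendsto (fun m => ‖h (b m)‖⁻¹ • h (b m)) atTop (𝓝 (‖L‖⁻¹ • L)) := by
  have httw : Tendsto t atTop (𝓝[>] (0:ℝ)) :=
    tendsto_nhdsWithin_of_tendsto_nhds_of_eventually_within _ ht0
      (Eventually.of_forall fun m => ht m)
  have hf : Tendsto (fun m => (t m)⁻¹ • h (t m • v)) atTop (𝓝 L) := hdhv.comp httw
  have hg : Tendsto (fun m => (t m)⁻¹ • (h (b m) - h (t m • v))) atTop (𝓝 0) := by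
    rw [tendsto_zero_iff_norm_tendsto_zero]
    refine squeeze_zero (fun m => norm_nonneg _)
      (g := fun m => (K : ℝ) * (‖b m - t m • v‖ / t m)) (fun m => ?_) ?_
    · have hd := hK.dist_le_mul (b m) (t m • v)
      rw [dist_eq_norm, dist_eq_norm] at hd
      rw [norm_smul, Real.norm_eq_abs, abs_of_pos (inv_pos.2 (ht m))]
      calc (t m)⁻¹ * ‖h (b m) - h (t m • v)‖
          ≤ (t m)⁻¹ * ((K : ℝ) * ‖b m - t m • v‖) := by
            gcongr
            exact inv_nonneg.2 (ht m).le
        _ = (K : ℝ) * (‖b m - t m • v‖ / t m) := by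
            field_simp
    · simpa using hb.const_mul (K : ℝ)
  have hmain : Tendsto (fun m => (t m)⁻¹ • h (b m)) atTop (𝓝 L) := by
    have heq : (fun m => (t m)⁻¹ • h (b m))
        = fun m => (t m)⁻¹ • h (t m • v) + (t m)⁻¹ • (h (b m) - h (t m • v)) := by
      funext m
      rw [← smul_add]
      congr 1
      abel
    rw [heq]
    simpa using hf.add hg
  have hne : ∀ᶠ m in atTop, h (b m) ≠ 0 := by
    filter_upwards [hmain.eventually_ne hL] with m hm
    intro h0'
    exact hm (by rw [h0', smul_zero])
  have hz : Tendsto (fun m => h (b m)) atTop (𝓝 0) := by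
    have heq : (fun m => h (b m)) = fun m => t m • ((t m)⁻¹ • h (b m)) := by
      funext m
      rw [smul_smul, mul_inv_cancel₀ (ht m).ne', one_smul]
    rw [heq]
    simpa using ht0.smul hmain
  refine ⟨hz, hne, ?_⟩
  have hcont : ContinuousAt (fun z : E => ‖z‖⁻¹ • z) L :=
    ((continuous_norm.continuousAt).inv₀ (norm_ne_zero_iff.2 hL)).smul continuousAt_id
  have := hcont.tendsto.comp hmain
  have heq : (fun z : E => ‖z‖⁻¹ • z) ∘ (fun m => (t m)⁻¹ • h (b m))
      = fun m => ‖h (b m)‖⁻¹ • h (b m) := by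
    funext m
    exact normalize_smul (inv_pos.2 (ht m)) _
  rwa [heq] at this

lemma dh_ne_zero {h : E → E} {K' : NNReal} (hK' : AntilipschitzWith K' h)
    (hh0 : h 0 = 0) {v L : E} (hv : ‖v‖ = 1)
    (hdhv : Tendsto (fun t : ℝ => t⁻¹ • h (t • v)) (𝓝[>] (0:ℝ)) (𝓝 L)) : L ≠ 0 := by
  have h1 : (1:ℝ) ≤ K' * ‖h v‖ := by
    have := hK'.le_mul_dist v 0
    rwa [hh0, dist_zero_right, dist_zero_right, hv] at this
  have hK'pos : (0:ℝ) < K' := by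
    by_contra hc
    push_neg at hc
    nlinarith [norm_nonneg (h v)]
  have hlow : ∀ t ∈ Ioi (0:ℝ), (K':ℝ)⁻¹ ≤ ‖t⁻¹ • h (t • v)‖ := by
    intro t htpos
    have htpos' : (0:ℝ) < t := htpos
    have hd := hK'.le_mul_dist (t • v) 0
    rw [hh0, dist_zero_right, dist_zero_right, norm_smul, hv, mul_one,
      Real.norm_eq_abs, abs_of_pos htpos'] at hd
    rw [norm_smul, Real.norm_eq_abs, abs_of_pos (inv_pos.2 htpos'), inv_mul_eq_div,
      le_div_iff₀ htpos']
    rw [inv_mul_le_iff₀ hK'pos]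
    linarith
  have hlim : (K':ℝ)⁻¹ ≤ ‖L‖ :=
    ge_of_tendsto hdhv.norm (eventually_nhdsWithin_of_forall hlow)
  intro hL0
  rw [hL0, norm_zero] at hlim
  exact absurd hlim (not_le.2 (inv_pos.2 hK'pos))

lemma dirSet_closed_limit {A : Set E} {v : E} (hv : ‖v‖ = 1) {vs : ℕ → E}
    (hvs : ∀ i, vs i ∈ dirSet A 0) (hlim : Tendsto vs atTop (𝓝 v)) :
    v ∈ dirSet A 0 := by
  have key : ∀ i : ℕ, ∃ y : E, (y ∈ A ∧ y ≠ 0) ∧ ‖y‖ < 1/(i+1) ∧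
      ‖‖y‖⁻¹ • y - vs i‖ < 1/(i+1) := by
    intro i
    obtain ⟨hn, x, hxA, hx0, hxd⟩ := hvs i
    simp only [sub_zero] at hxd
    have hpos : (0:ℝ) < 1/(i+1) := by positivity
    have e1 : ∀ᶠ j in atTop, ‖x j‖ < 1/(i+1) :=
      (tendsto_zero_iff_norm_tendsto_zero.1 hx0).eventually_lt_const hpos
    have e2 : ∀ᶠ j in atTop, ‖‖x j‖⁻¹ • x j - vs i‖ < 1/(i+1) :=
      (tendsto_iff_norm_sub_tendsto_zero.1 hxd).eventually_lt_const hpos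
    obtain ⟨j, hj1, hj2⟩ := (e1.and e2).exists
    exact ⟨x j, hxA j, hj1, hj2⟩
  choose y hy hynorm hydir using key
  refine ⟨hv, y, hy, ?_, ?_⟩
  · rw [tendsto_zero_iff_norm_tendsto_zero]
    exact squeeze_zero (fun i => norm_nonneg _) (fun i => (hynorm i).le)
      tendsto_one_div_add_atTop_nhds_zero_nat
  · simp only [sub_zero]
    rw [tendsto_iff_norm_sub_tendsto_zero]
    have hvlim : Tendsto (fun i => ‖vs i - v‖) atTop (𝓝 0) :=
      tendsto_iff_norm_sub_tendsto_zero.1 hlim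
    have hb : Tendsto (fun i : ℕ => 1/(i+1) + ‖vs i - v‖) atTop (𝓝 0) := by
      simpa using tendsto_one_div_add_atTop_nhds_zero_nat.add hvlim
    refine squeeze_zero (fun i => norm_nonneg _) (fun i => ?_) hb
    have htri := dist_triangle (‖y i‖⁻¹ • y i) (vs i) v
    simp only [dist_eq_norm] at htri
    have := (hydir i).le
    linarith

/-- Generic forward inclusion `LD(h(X)) ⊆ {s • dh v}`. -/
lemma ldir_image_subset {h : E → E} {K K' : NNReal} (hK : LipschitzWith K h)
    (hK' : AntilipschitzWith K' h) (hh0 : h 0 = 0)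
    {A : Set E} (dh : E → E)
    (hdh : ∀ v ∈ dirSet A 0,
      Tendsto (fun t : ℝ => t⁻¹ • h (t • v)) (𝓝[>] (0:ℝ)) (𝓝 (dh v)))
    (X : Set E)
    (hP : ∀ x : ℕ → E, (∀ i, x i ∈ X ∧ x i ≠ 0) → Tendsto x atTop (𝓝 0) →
      ∃ v ∈ dirSet A 0, ∃ φ : ℕ → ℕ, StrictMono φ ∧
        Tendsto (fun m => ‖x (φ m)‖⁻¹ • x (φ m)) atTop (𝓝 v)) :
    LDir (h '' X) 0 ⊆ {w | ∃ v ∈ dirSet A 0, ∃ s : ℝ, 0 ≤ s ∧ w = s • dh v} := by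
  rintro w ⟨a, ⟨ha1, y, hy, hy0, hyd⟩, tc, htc, rfl⟩
  simp only [sub_zero] at hyd
  have hxy : ∀ i, ∃ x, x ∈ X ∧ h x = y i := by
    intro i
    obtain ⟨x, hx, hxy⟩ := (hy i).1
    exact ⟨x, hx, hxy⟩
  choose x hxX hxy using hxy
  have hxne : ∀ i, x i ≠ 0 := by
    intro i hxi0
    exact (hy i).2 (by rw [← hxy i, hxi0, hh0])
  have hx0 : Tendsto x atTop (𝓝 0) := by
    rw [tendsto_zero_iff_norm_tendsto_zero]
    refine squeeze_zero (fun i => norm_nonneg _)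
      (g := fun i => (K' : ℝ) * ‖y i‖) (fun i => ?_) ?_
    · have := hK'.le_mul_dist (x i) 0
      rwa [hh0, dist_zero_right, dist_zero_right, hxy i] at this
    · simpa using (tendsto_zero_iff_norm_tendsto_zero.1 hy0).const_mul (K' : ℝ)
  obtain ⟨v, hvA, φ, hφ, hdirlim⟩ := hP x (fun i => ⟨hxX i, hxne i⟩) hx0
  have hLne : dh v ≠ 0 := dh_ne_zero hK' hh0 hvA.1 (hdh v hvA)
  have htpos : ∀ m, (0:ℝ) < ‖x (φ m)‖ := fun m => norm_pos_iff.2 (hxne (φ m))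
  have ht0 : Tendsto (fun m => ‖x (φ m)‖) atTop (𝓝 0) :=
    (tendsto_zero_iff_norm_tendsto_zero.1 hx0).comp hφ.tendsto_atTop
  have hb : Tendsto (fun m => ‖x (φ m) - ‖x (φ m)‖ • v‖ / ‖x (φ m)‖) atTop (𝓝 0) := by
    have heq : (fun m => ‖x (φ m) - ‖x (φ m)‖ • v‖ / ‖x (φ m)‖)
        = fun m => ‖‖x (φ m)‖⁻¹ • x (φ m) - v‖ := by
      funext m
      exact ratio_rewrite (htpos m) _ _
    rw [heq]
    exact tendsto_iff_norm_sub_tendsto_zero.1 hdirlim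
  obtain ⟨-, -, hdir⟩ := aux_limits hK hLne (hdh v hvA) htpos ht0 hb
  have hsub : Tendsto (fun m => ‖y (φ m)‖⁻¹ • y (φ m)) atTop (𝓝 a) :=
    hyd.comp hφ.tendsto_atTop
  have heq2 : (fun m => ‖h (x (φ m))‖⁻¹ • h (x (φ m)))
      = fun m => ‖y (φ m)‖⁻¹ • y (φ m) := by
    funext m
    rw [hxy]
  rw [heq2] at hdir
  have haeq : a = ‖dh v‖⁻¹ • dh v := tendsto_nhds_unique hsub hdir
  refine ⟨v, hvA, tc * ‖dh v‖⁻¹, mul_nonneg htc (inv_nonneg.2 (norm_nonneg _)), ?_⟩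
  rw [haeq, smul_smul]

/-- Generic reverse inclusion `{s • dh v} ⊆ LD(h(X))`. -/
lemma subset_ldir_image {h : E → E} {K K' : NNReal} (hK : LipschitzWith K h)
    (hK' : AntilipschitzWith K' h) (hh0 : h 0 = 0)
    {A : Set E} (dh : E → E)
    (hdh : ∀ v ∈ dirSet A 0,
      Tendsto (fun t : ℝ => t⁻¹ • h (t • v)) (𝓝[>] (0:ℝ)) (𝓝 (dh v)))
    (X : Set E)
    (hQ : ∀ v ∈ dirSet A 0, ∃ b : ℕ → E, (∀ m, b m ∈ X) ∧
      Tendsto (fun m => ‖b m - (1/(m+1) : ℝ) • v‖ / (1/(m+1) : ℝ)) atTop (𝓝 0)) :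
    {w | ∃ v ∈ dirSet A 0, ∃ s : ℝ, 0 ≤ s ∧ w = s • dh v} ⊆ LDir (h '' X) 0 := by
  rintro w ⟨v, hvA, s, hs, rfl⟩
  have hLne : dh v ≠ 0 := dh_ne_zero hK' hh0 hvA.1 (hdh v hvA)
  obtain ⟨b, hbX, hb⟩ := hQ v hvA
  have htpos : ∀ m : ℕ, (0:ℝ) < 1/(m+1) := fun m => by positivity
  obtain ⟨hz, hne, hdir⟩ := aux_limits hK hLne (hdh v hvA) htpos
    tendsto_one_div_add_atTop_nhds_zero_nat hb
  have hmem : (‖dh v‖⁻¹ • dh v) ∈ dirSet (h '' X) 0 := by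
    refine mem_dirSet_of_eventually (norm_normalize hLne) (fun m => h (b m)) ?_ hz ?_
    · filter_upwards [hne] with m hm
      exact ⟨mem_image_of_mem h (hbX m), hm⟩
    · simpa only [sub_zero] using hdir
  refine ⟨‖dh v‖⁻¹ • dh v, hmem, s * ‖dh v‖, mul_nonneg hs (norm_nonneg _), ?_⟩
  rw [smul_smul, mul_assoc, mul_inv_cancel₀ (norm_ne_zero_iff.2 hLne), mul_one]

end Stmt6Aux

open Stmt6Aux in
theorem stmt6 {n : ℕ} (A : Set (EuclideanSpace ℝ (Fin n)))
    (h0 : (0 : EuclideanSpace ℝ (Fin n)) ∈ closure A)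
    (h : EuclideanSpace ℝ (Fin n) → EuclideanSpace ℝ (Fin n))
    (hh : IsBiLipschitz h) (hh0 : h 0 = 0)
    (dh : EuclideanSpace ℝ (Fin n) → EuclideanSpace ℝ (Fin n))
    (hdh : ∀ v ∈ dirSet A 0,
      Tendsto (fun t : ℝ => t⁻¹ • h (t • v)) (𝓝[>] (0 : ℝ)) (𝓝 (dh v)))
    (hssp : SSP A 0) :
    LDir (h '' A) 0 = LDir (h '' LDir A 0) 0 ∧
    LDir (h '' A) 0 = {w | ∃ v ∈ dirSet A 0, ∃ s : ℝ, 0 ≤ s ∧ w = s • dh v} := by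
  obtain ⟨hbij, K, K', hK, hK'⟩ := hh
  -- Property hP for A
  have hPA : ∀ x : ℕ → EuclideanSpace ℝ (Fin n), (∀ i, x i ∈ A ∧ x i ≠ 0) →
      Tendsto x atTop (𝓝 0) →
      ∃ v ∈ dirSet A 0, ∃ φ : ℕ → ℕ, StrictMono φ ∧
        Tendsto (fun m => ‖x (φ m)‖⁻¹ • x (φ m)) atTop (𝓝 v) := by
    intro x hx hx0
    have hsph : ∀ i, (‖x i‖⁻¹ • x i) ∈ Metric.sphere (0 : EuclideanSpace ℝ (Fin n)) 1 :=
      fun i => mem_sphere_zero_iff_norm.2 (norm_normalize (hx i).2)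
    obtain ⟨v, hvS, φ, hφ, hconv⟩ := (isCompact_sphere _ 1).tendsto_subseq hsph
    refine ⟨v, ?_, φ, hφ, hconv⟩
    refine ⟨mem_sphere_zero_iff_norm.1 hvS, fun i => x (φ i),
      fun i => hx (φ i), hx0.comp hφ.tendsto_atTop, ?_⟩
    simpa only [sub_zero, Function.comp_def] using hconv
  -- Property hP for LDir A 0
  have hPL : ∀ x : ℕ → EuclideanSpace ℝ (Fin n), (∀ i, x i ∈ LDir A 0 ∧ x i ≠ 0) →
      Tendsto x atTop (𝓝 0) →
      ∃ v ∈ dirSet A 0, ∃ φ : ℕ → ℕ, StrictMono φ ∧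
        Tendsto (fun m => ‖x (φ m)‖⁻¹ • x (φ m)) atTop (𝓝 v) := by
    intro x hx hx0
    have hdec : ∀ i, ∃ v, v ∈ dirSet A 0 ∧ ∃ t : ℝ, 0 < t ∧ x i = t • v := by
      intro i
      obtain ⟨v, hv, t, ht, hxi⟩ := (hx i).1
      have htne : t ≠ 0 := by
        intro ht0
        exact (hx i).2 (by rw [hxi, ht0, zero_smul])
      exact ⟨v, hv, t, lt_of_le_of_ne ht (Ne.symm htne), hxi⟩
    choose vs hvs ts hts hxe using hdec
    have hdirv : ∀ i, ‖x i‖⁻¹ • x i = vs i := by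
      intro i
      rw [hxe i, normalize_smul (hts i), (hvs i).1, inv_one, one_smul]
    have hsph : ∀ i, vs i ∈ Metric.sphere (0 : EuclideanSpace ℝ (Fin n)) 1 :=
      fun i => mem_sphere_zero_iff_norm.2 (hvs i).1
    obtain ⟨v, hvS, φ, hφ, hconv⟩ := (isCompact_sphere _ 1).tendsto_subseq hsph
    have hvA : v ∈ dirSet A 0 :=
      dirSet_closed_limit (mem_sphere_zero_iff_norm.1 hvS) (fun i => hvs (φ i)) hconv
    refine ⟨v, hvA, φ, hφ, ?_⟩
    simpa only [hdirv, Function.comp_def] using hconv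
  -- Property hQ for A, via SSP
  have hQA : ∀ v ∈ dirSet A 0, ∃ b : ℕ → EuclideanSpace ℝ (Fin n), (∀ m, b m ∈ A) ∧
      Tendsto (fun m => ‖b m - (1/(m+1) : ℝ) • v‖ / (1/(m+1) : ℝ)) atTop (𝓝 0) := by
    intro v hv
    have hvne : v ≠ 0 := by
      intro hv0
      have h1 := hv.1
      rw [hv0, norm_zero] at h1
      exact one_ne_zero h1.symm
    have htpos : ∀ m : ℕ, (0:ℝ) < 1/(m+1) := fun m => by positivity
    have hane : ∀ m : ℕ, (1/(m+1) : ℝ) • v ≠ 0 :=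
      fun m => smul_ne_zero (htpos m).ne' hvne
    have ha0 : Tendsto (fun m : ℕ => (1/(m+1) : ℝ) • v) atTop (𝓝 0) := by
      simpa using (tendsto_one_div_add_atTop_nhds_zero_nat (𝕜 := ℝ)).smul_const v
    have hadir : Tendsto (fun m : ℕ =>
        ‖(1/(m+1) : ℝ) • v - 0‖⁻¹ • ((1/(m+1) : ℝ) • v - 0)) atTop (𝓝 v) := by
      have heq : (fun m : ℕ => ‖(1/(m+1) : ℝ) • v - 0‖⁻¹ • ((1/(m+1) : ℝ) • v - 0))
          = fun _ => v := by
        funext m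
        rw [sub_zero, normalize_smul (htpos m), hv.1, inv_one, one_smul]
      rw [heq]
      exact tendsto_const_nhds
    obtain ⟨b, hbA, hr1, -⟩ := hssp (fun m : ℕ => (1/(m+1) : ℝ) • v) hane ha0 ⟨v, hv, hadir⟩
    refine ⟨b, hbA, ?_⟩
    have heq : (fun m : ℕ => ‖b m - (1/(m+1) : ℝ) • v‖ / (1/(m+1) : ℝ))
        = fun m : ℕ => ‖(1/(m+1) : ℝ) • v - b m‖ / ‖(1/(m+1) : ℝ) • v - 0‖ := by
      funext m
      rw [norm_sub_rev, sub_zero, norm_smul, Real.norm_eq_abs, abs_of_pos (htpos m),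
        hv.1, mul_one]
    rw [heq]
    exact hr1
  -- Property hQ for LDir A 0 (trivial)
  have hQL : ∀ v ∈ dirSet A 0, ∃ b : ℕ → EuclideanSpace ℝ (Fin n),
      (∀ m, b m ∈ LDir A 0) ∧
      Tendsto (fun m => ‖b m - (1/(m+1) : ℝ) • v‖ / (1/(m+1) : ℝ)) atTop (𝓝 0) := by
    intro v hv
    refine ⟨fun m => (1/(m+1) : ℝ) • v, fun m => ⟨v, hv, 1/(m+1), by positivity, rfl⟩, ?_⟩
    simp
  have e1 : LDir (h '' A) 0
      = {w | ∃ v ∈ dirSet A 0, ∃ s : ℝ, 0 ≤ s ∧ w = s • dh v} :=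
    Subset.antisymm (ldir_image_subset hK hK' hh0 dh hdh A hPA)
      (subset_ldir_image hK hK' hh0 dh hdh A hQA)
  have e2 : LDir (h '' LDir A 0) 0
      = {w | ∃ v ∈ dirSet A 0, ∃ s : ℝ, 0 ≤ s ∧ w = s • dh v} :=
    Subset.antisymm (ldir_image_subset hK hK' hh0 dh hdh (LDir A 0) hPL)
      (subset_ldir_image hK hK' hh0 dh hdh (LDir A 0) hQL)
  exact ⟨e1.trans e2.symm, e1⟩
end

section
/- Let A ⊆ ℝⁿ, let p ∈ closure(A), and let h : ℝⁿ → ℝⁿ be a bi-Lipschitz homeomorphism. Assume that A satisfies condition (SSP) at p. Then h(A) satisfies condition (SSP) at h(p) if and only if h(p + LD_p(A)) satisfies condition (SSP) at h(p), where p + LD_p(A) := {p + w : w ∈ LD_p(A)} is the geometric tangent cone of A at p. -/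
open Filter Topology Set Asymptotics

open Metric

variable {E : Type*} [NormedAddCommGroup E] [NormedSpace ℝ E]

set_option linter.unusedSectionVars false

lemma dir_norm {x p : E} (h : x ≠ p) : ‖‖x - p‖⁻¹ • (x - p)‖ = 1 := by
  have h0 : x - p ≠ 0 := sub_ne_zero.mpr h
  rw [norm_smul, norm_inv, norm_norm, inv_mul_cancel₀ (norm_ne_zero_iff.mpr h0)]

lemma unit_dir_sub (x y : E) (hx : x ≠ 0) :
    ‖‖x‖⁻¹ • x - ‖y‖⁻¹ • y‖ ≤ 2 * (‖x - y‖ / ‖x‖) := by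
  have hx0 : (0:ℝ) < ‖x‖ := norm_pos_iff.mpr hx
  by_cases hy : y = 0
  · subst hy
    simp only [norm_zero, sub_zero, smul_zero, sub_zero]
    rw [norm_smul, norm_inv, norm_norm, inv_mul_cancel₀ hx0.ne']
    rw [div_self hx0.ne']
    norm_num
  · have hy0 : (0:ℝ) < ‖y‖ := norm_pos_iff.mpr hy
    have key : ‖x‖⁻¹ • x - ‖y‖⁻¹ • y = ‖x‖⁻¹ • (x - y) + (‖x‖⁻¹ - ‖y‖⁻¹) • y := by
      rw [smul_sub, sub_smul]; abel
    rw [key]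
    have h1 : ‖‖x‖⁻¹ • (x - y)‖ = ‖x - y‖ / ‖x‖ := by
      rw [norm_smul, norm_inv, norm_norm]; ring
    have h2 : ‖(‖x‖⁻¹ - ‖y‖⁻¹) • y‖ ≤ ‖x - y‖ / ‖x‖ := by
      rw [norm_smul, Real.norm_eq_abs]
      have e1 : (‖x‖⁻¹ - ‖y‖⁻¹ : ℝ) = (‖y‖ - ‖x‖) / (‖x‖ * ‖y‖) := by
        field_simp
      rw [e1, abs_div, abs_of_pos (show (0:ℝ) < ‖x‖ * ‖y‖ by positivity)]
      have e2 : |‖y‖ - ‖x‖| ≤ ‖x - y‖ := by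
        rw [norm_sub_rev]; exact abs_norm_sub_norm_le y x
      calc |‖y‖ - ‖x‖| / (‖x‖ * ‖y‖) * ‖y‖ = |‖y‖ - ‖x‖| / ‖x‖ := by
            field_simp
        _ ≤ ‖x - y‖ / ‖x‖ := by gcongr
    calc ‖‖x‖⁻¹ • (x - y) + (‖x‖⁻¹ - ‖y‖⁻¹) • y‖
        ≤ ‖‖x‖⁻¹ • (x - y)‖ + ‖(‖x‖⁻¹ - ‖y‖⁻¹) • y‖ := norm_add_le _ _
      _ ≤ 2 * (‖x - y‖ / ‖x‖) := by rw [h1]; linarith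

lemma approx_eventually {u v : ℕ → E}
    (hu : ∀ᶠ m in atTop, u m ≠ 0)
    (hr : Tendsto (fun m => ‖u m - v m‖ / ‖u m‖) atTop (𝓝 0)) :
    ∀ᶠ m in atTop, u m ≠ 0 ∧ v m ≠ 0 ∧ ‖u m - v m‖ ≤ 2⁻¹ * ‖u m‖ ∧
      2⁻¹ * ‖u m‖ ≤ ‖v m‖ ∧ ‖v m‖ ≤ 2 * ‖u m‖ := by
  have h2 : ∀ᶠ m in atTop, ‖u m - v m‖ / ‖u m‖ < 2⁻¹ :=
    hr.eventually_lt_const (by norm_num)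
  filter_upwards [hu, h2] with m hm h2m
  have hun : 0 < ‖u m‖ := norm_pos_iff.mpr hm
  have hle : ‖u m - v m‖ ≤ 2⁻¹ * ‖u m‖ := by
    have := (div_lt_iff₀ hun).mp h2m
    linarith
  have ht1 : ‖u m‖ - ‖v m‖ ≤ ‖u m - v m‖ := norm_sub_norm_le _ _
  have ht2 : ‖v m‖ - ‖u m‖ ≤ ‖u m - v m‖ := by
    rw [norm_sub_rev]; exact norm_sub_norm_le _ _
  have hv : 2⁻¹ * ‖u m‖ ≤ ‖v m‖ := by linarith
  exact ⟨hm, norm_pos_iff.mp (by linarith), hle, hv, by linarith⟩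

lemma dir_transfer {u v : ℕ → E} {d : E}
    (hu : ∀ᶠ m in atTop, u m ≠ 0)
    (hr : Tendsto (fun m => ‖u m - v m‖ / ‖u m‖) atTop (𝓝 0))
    (hd : Tendsto (fun m => ‖u m‖⁻¹ • u m) atTop (𝓝 d)) :
    (∀ᶠ m in atTop, v m ≠ 0) ∧ Tendsto (fun m => ‖v m‖⁻¹ • v m) atTop (𝓝 d) := by
  have hA := approx_eventually hu hr
  refine ⟨hA.mono fun m hm => hm.2.1, ?_⟩
  rw [tendsto_iff_norm_sub_tendsto_zero]
  apply squeeze_zero' (g := fun m => 4 * (‖u m - v m‖ / ‖u m‖) + ‖‖u m‖⁻¹ • u m - d‖)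
  · exact Eventually.of_forall fun m => norm_nonneg _
  · filter_upwards [hA] with m hm
    obtain ⟨hu0, hv0, hle, hlow, hup⟩ := hm
    have hun : 0 < ‖u m‖ := norm_pos_iff.mpr hu0
    have hvn : 0 < ‖v m‖ := norm_pos_iff.mpr hv0
    have step1 : ‖‖v m‖⁻¹ • v m - ‖u m‖⁻¹ • u m‖ ≤ 2 * (‖v m - u m‖ / ‖v m‖) :=
      unit_dir_sub (v m) (u m) hv0
    have step2 : ‖v m - u m‖ / ‖v m‖ ≤ 2 * (‖u m - v m‖ / ‖u m‖) := by
      rw [norm_sub_rev]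
      rw [div_le_iff₀ hvn, mul_comm (2 : ℝ), mul_assoc, div_mul_eq_mul_div, le_div_iff₀ hun]
      nlinarith [norm_nonneg (u m - v m)]
    calc ‖‖v m‖⁻¹ • v m - d‖
        ≤ ‖‖v m‖⁻¹ • v m - ‖u m‖⁻¹ • u m‖ + ‖‖u m‖⁻¹ • u m - d‖ := by
          have := norm_sub_le_norm_sub_add_norm_sub (‖v m‖⁻¹ • v m) (‖u m‖⁻¹ • u m) d
          exact this
      _ ≤ 4 * (‖u m - v m‖ / ‖u m‖) + ‖‖u m‖⁻¹ • u m - d‖ := by linarith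
  · have h1 : Tendsto (fun m => ‖‖u m‖⁻¹ • u m - d‖) atTop (𝓝 0) :=
      tendsto_iff_norm_sub_tendsto_zero.mp hd
    have := (hr.const_mul 4).add h1
    simpa using this

lemma subseq_of_not_tendsto {f : ℕ → ℝ} {P : ℕ → Prop} (h : ¬ Tendsto f atTop (𝓝 0))
    (hf : ∀ᶠ m in atTop, 0 ≤ f m) (hP : ∀ᶠ m in atTop, P m) :
    ∃ ε : ℝ, 0 < ε ∧ ∃ φ : ℕ → ℕ, StrictMono φ ∧ ∀ k, ε ≤ f (φ k) ∧ P (φ k) := by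
  rw [NormedAddCommGroup.tendsto_nhds_zero] at h
  push_neg at h
  obtain ⟨ε, hε, hfreq⟩ := h
  refine ⟨ε, hε, ?_⟩
  have hfreq2 : ∃ᶠ m in atTop, ε ≤ f m ∧ P m := by
    refine (hfreq.and_eventually (hf.and hP)).mono ?_
    rintro m ⟨h1, h2, h3⟩
    rw [Real.norm_eq_abs, abs_of_nonneg h2] at h1
    exact ⟨h1, h3⟩
  exact extraction_of_frequently_atTop hfreq2

lemma exists_subseq_dir [FiniteDimensional ℝ E] (u : ℕ → E) (hu : ∀ m, ‖u m‖ = 1) :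
    ∃ d : E, ‖d‖ = 1 ∧ ∃ φ : ℕ → ℕ, StrictMono φ ∧
      Tendsto (fun k => u (φ k)) atTop (𝓝 d) := by
  obtain ⟨d, hd, φ, hφ, hconv⟩ := (isCompact_sphere (0:E) 1).tendsto_subseq
    (x := u) (fun m => mem_sphere_zero_iff_norm.mpr (hu m))
  exact ⟨d, mem_sphere_zero_iff_norm.mp hd, φ, hφ, hconv⟩

lemma dirSet_seq_approx {A : Set E} {p u : E} (hu : u ∈ dirSet A p) {ε : ℝ} (hε : 0 < ε) :
    ∃ z, z ∈ A ∧ z ≠ p ∧ ‖z - p‖ < ε ∧ ‖‖z - p‖⁻¹ • (z - p) - u‖ < ε := by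
  obtain ⟨hn, x, hx, hxp, hxd⟩ := hu
  have h1 : ∀ᶠ i in atTop, ‖x i - p‖ < ε := by
    have := hxp.eventually (Metric.ball_mem_nhds p hε)
    filter_upwards [this] with i hi
    rwa [dist_eq_norm] at hi
  have h2 : ∀ᶠ i in atTop, ‖‖x i - p‖⁻¹ • (x i - p) - u‖ < ε := by
    have := hxd.eventually (Metric.ball_mem_nhds u hε)
    filter_upwards [this] with i hi
    rwa [dist_eq_norm] at hi
  obtain ⟨i, hi1, hi2⟩ := (h1.and h2).exists
  exact ⟨x i, (hx i).1, (hx i).2, hi1, hi2⟩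

lemma dirSet_closed' {A : Set E} {p : E} {u : ℕ → E} {d : E}
    (hu : ∀ k, u k ∈ dirSet A p) (hud : Tendsto u atTop (𝓝 d)) : d ∈ dirSet A p := by
  have hnorm : ‖d‖ = 1 := by
    have h1 : Tendsto (fun k => ‖u k‖) atTop (𝓝 ‖d‖) := hud.norm
    have h2 : (fun k => ‖u k‖) = fun _ => (1:ℝ) := funext fun k => (hu k).1
    rw [h2] at h1
    exact tendsto_nhds_unique h1 tendsto_const_nhds
  have hex : ∀ k : ℕ, ∃ z, z ∈ A ∧ z ≠ p ∧ ‖z - p‖ < ((k:ℝ)+1)⁻¹ ∧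
      ‖‖z - p‖⁻¹ • (z - p) - u k‖ < ((k:ℝ)+1)⁻¹ :=
    fun k => dirSet_seq_approx (hu k) (by positivity)
  choose z hzA hzp hz1 hz2 using hex
  have hinv : Tendsto (fun k : ℕ => ((k:ℝ)+1)⁻¹) atTop (𝓝 0) := by
    simpa [one_div] using (tendsto_one_div_add_atTop_nhds_zero_nat : Tendsto (fun n : ℕ => 1 / ((n:ℝ) + 1)) atTop (𝓝 0))
  refine ⟨hnorm, z, fun k => ⟨hzA k, hzp k⟩, ?_, ?_⟩
  · rw [tendsto_iff_dist_tendsto_zero]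
    apply squeeze_zero' (Eventually.of_forall fun k => dist_nonneg)
      (Eventually.of_forall fun k => ?_) hinv
    rw [dist_eq_norm]; exact (hz1 k).le
  · rw [tendsto_iff_norm_sub_tendsto_zero]
    have hle : ∀ᶠ k in atTop, ‖‖z k - p‖⁻¹ • (z k - p) - d‖ ≤ ((k:ℝ)+1)⁻¹ + ‖u k - d‖ := by
      refine Eventually.of_forall fun k => ?_
      have t1 : ‖‖z k - p‖⁻¹ • (z k - p) - d‖ ≤
          ‖‖z k - p‖⁻¹ • (z k - p) - u k‖ + ‖u k - d‖ :=
        norm_sub_le_norm_sub_add_norm_sub _ _ _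
      have := (hz2 k).le
      linarith
    have h1 : Tendsto (fun k => ‖u k - d‖) atTop (𝓝 0) :=
      tendsto_iff_norm_sub_tendsto_zero.mp hud
    have hg : Tendsto (fun k : ℕ => ((k:ℝ)+1)⁻¹ + ‖u k - d‖) atTop (𝓝 0) := by
      simpa using hinv.add h1
    exact squeeze_zero' (Eventually.of_forall fun k => norm_nonneg _) hle hg

/-- Relative closeness of `Y` to `X` near `p`. -/
def RelClose (X Y : Set E) (p : E) : Prop :=
  ∀ x : ℕ → E, (∀ᶠ m in atTop, x m ∈ X ∧ x m ≠ p) → Tendsto x atTop (𝓝 p) →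
    ∃ y : ℕ → E, (∀ m, y m ∈ Y) ∧
      Tendsto (fun m => ‖x m - y m‖ / ‖x m - p‖) atTop (𝓝 0)

lemma exists_approx_of_infDist {Y : Set E} {p : E} (hY : Y.Nonempty) {x : ℕ → E}
    (hinf : Tendsto (fun m => infDist (x m) Y / ‖x m - p‖) atTop (𝓝 0))
    (hxp : ∀ᶠ m in atTop, x m ≠ p) :
    ∃ y : ℕ → E, (∀ m, y m ∈ Y) ∧
      Tendsto (fun m => ‖x m - y m‖ / ‖x m - p‖) atTop (𝓝 0) := by
  have hex : ∀ m : ℕ, ∃ y, y ∈ Y ∧ (x m ≠ p →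
      dist (x m) y ≤ infDist (x m) Y + ((m:ℝ)+1)⁻¹ * ‖x m - p‖) := by
    intro m
    by_cases hxm : x m = p
    · exact ⟨hY.some, hY.some_mem, fun h => absurd hxm h⟩
    · have hδ : 0 < ((m:ℝ)+1)⁻¹ * ‖x m - p‖ := by
        have h' : x m - p ≠ 0 := sub_ne_zero.mpr hxm
        exact mul_pos (by positivity) (norm_pos_iff.mpr h')
      obtain ⟨y, hyY, hyd⟩ := (infDist_lt_iff hY).mp (lt_add_of_pos_right _ hδ)
      exact ⟨y, hyY, fun _ => hyd.le⟩
  choose y hyY hyd using hex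
  refine ⟨y, hyY, ?_⟩
  have hinv : Tendsto (fun m : ℕ => ((m:ℝ)+1)⁻¹) atTop (𝓝 0) := by
    simpa [one_div] using (tendsto_one_div_add_atTop_nhds_zero_nat : Tendsto (fun n : ℕ => 1 / ((n:ℝ) + 1)) atTop (𝓝 0))
  apply squeeze_zero' (g := fun m => infDist (x m) Y / ‖x m - p‖ + ((m:ℝ)+1)⁻¹)
  · exact Eventually.of_forall fun m => by positivity
  · filter_upwards [hxp] with m hm
    have h0 : (0:ℝ) < ‖x m - p‖ := norm_pos_iff.mpr (sub_ne_zero.mpr hm)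
    have hd := hyd m hm
    rw [dist_eq_norm] at hd
    calc ‖x m - y m‖ / ‖x m - p‖
        ≤ (infDist (x m) Y + ((m:ℝ)+1)⁻¹ * ‖x m - p‖) / ‖x m - p‖ := by gcongr
      _ = infDist (x m) Y / ‖x m - p‖ + ((m:ℝ)+1)⁻¹ := by
          rw [add_div, mul_div_assoc, div_self h0.ne', mul_one]
  · simpa using hinf.add hinv

lemma cone_dir {A : Set E} {p x : E} (hx : ∃ w ∈ LDir A p, x = p + w) (hxp : x ≠ p) :
    ‖x - p‖⁻¹ • (x - p) ∈ dirSet A p := by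
  obtain ⟨w, ⟨a, haD, t, ht, rfl⟩, rfl⟩ := hx
  have hn1 : ‖a‖ = 1 := haD.1
  have ht0 : t ≠ 0 := by
    rintro rfl
    simp at hxp
  have ht' : 0 < t := lt_of_le_of_ne ht (Ne.symm ht0)
  have heq : p + t • a - p = t • a := by abel
  rw [heq, norm_smul, Real.norm_eq_abs, abs_of_pos ht', hn1, mul_one, smul_smul,
    inv_mul_cancel₀ ht0, one_smul]
  exact haD

lemma exists_dir [FiniteDimensional ℝ E] {A : Set E} {p : E} {x : ℕ → E}
    (hx : ∀ᶠ m in atTop, x m ∈ A ∧ x m ≠ p) (hxt : Tendsto x atTop (𝓝 p)) :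
    ∃ d, d ∈ dirSet A p := by
  obtain ⟨N, hN⟩ := eventually_atTop.mp hx
  set x' : ℕ → E := fun m => x (m + N) with hx'def
  have hgood : ∀ m, x' m ∈ A ∧ x' m ≠ p := fun m => hN _ (Nat.le_add_left N m)
  have hx't : Tendsto x' atTop (𝓝 p) := hxt.comp (tendsto_add_atTop_nat N)
  obtain ⟨d, hd1, ψ, hψ, hud⟩ := exists_subseq_dir
    (fun m => ‖x' m - p‖⁻¹ • (x' m - p)) (fun m => dir_norm (hgood m).2)
  refine ⟨d, hd1, fun k => x' (ψ k), fun k => hgood (ψ k), hx't.comp hψ.tendsto_atTop, hud⟩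

/-- Relative closeness implies inclusion of direction sets. -/
lemma dirSet_mono {X Y : Set E} {p : E} (hXY : RelClose X Y p) :
    dirSet X p ⊆ dirSet Y p := by
  classical
  rintro d ⟨hd1, x, hx, hxt, hxd⟩
  obtain ⟨y, hyY, hr⟩ := hXY x (Eventually.of_forall hx) hxt
  have hu0 : ∀ᶠ m in atTop, x m - p ≠ 0 :=
    Eventually.of_forall fun m => sub_ne_zero.mpr (hx m).2
  have hr' : Tendsto (fun m => ‖(x m - p) - (y m - p)‖ / ‖x m - p‖) atTop (𝓝 0) := by
    simpa [sub_sub_sub_cancel_right] using hr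
  obtain ⟨hv0, hvd⟩ := dir_transfer (v := fun m => y m - p) hu0 hr' hxd
  have happ := approx_eventually (v := fun m => y m - p) hu0 hr'
  have hyt : Tendsto y atTop (𝓝 p) := by
    rw [tendsto_iff_dist_tendsto_zero]
    apply squeeze_zero' (Eventually.of_forall fun m => dist_nonneg)
      (g := fun m => 2 * ‖x m - p‖)
    · filter_upwards [happ] with m hm
      rw [dist_eq_norm]
      exact hm.2.2.2.2
    · have : Tendsto (fun m => dist (x m) p) atTop (𝓝 0) :=
        tendsto_iff_dist_tendsto_zero.mp hxt
      simp only [dist_eq_norm] at this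
      simpa using this.const_mul 2
  have hne : ∀ᶠ m in atTop, y m ≠ p := hv0.mono fun m hm h => hm (by rw [h, sub_self])
  obtain ⟨m0, hm0⟩ := hne.exists
  set y' : ℕ → E := fun m => if y m = p then y m0 else y m with hy'def
  have hEq : y =ᶠ[atTop] y' := hne.mono fun m hm => by simp [hy'def, if_neg hm]
  refine ⟨hd1, y', fun m => ?_, hyt.congr' hEq, ?_⟩
  · by_cases h : y m = p
    · simp only [hy'def, if_pos h]
      exact ⟨hyY m0, hm0⟩
    · simp only [hy'def, if_neg h]
      exact ⟨hyY m, h⟩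
  · refine hvd.congr' ?_
    filter_upwards [hne] with m hm
    simp [hy'def, if_neg hm]

lemma infDist_cone_ratio [FiniteDimensional ℝ E] {A : Set E} {p : E} {x : ℕ → E}
    (hx : ∀ᶠ m in atTop, x m ∈ A ∧ x m ≠ p) (hxt : Tendsto x atTop (𝓝 p)) :
    Tendsto (fun m => infDist (x m) {z | ∃ w ∈ LDir A p, z = p + w} / ‖x m - p‖)
      atTop (𝓝 0) := by
  set C := {z : E | ∃ w ∈ LDir A p, z = p + w} with hC
  by_contra hcon
  obtain ⟨ε, hε, φ, hφ, hφf⟩ := subseq_of_not_tendsto hcon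
    (Eventually.of_forall fun m => div_nonneg infDist_nonneg (norm_nonneg _)) hx
  set x1 : ℕ → E := fun k => x (φ k) with hx1
  have hx1t : Tendsto x1 atTop (𝓝 p) := hxt.comp hφ.tendsto_atTop
  have hgood : ∀ k, x1 k ∈ A ∧ x1 k ≠ p := fun k => (hφf k).2
  obtain ⟨d, hd1, ψ, hψ, hud⟩ := exists_subseq_dir
    (fun k => ‖x1 k - p‖⁻¹ • (x1 k - p)) (fun k => dir_norm (hgood k).2)
  set x2 : ℕ → E := fun k => x1 (ψ k) with hx2
  have hdmem : d ∈ dirSet A p :=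
    ⟨hd1, x2, fun k => hgood (ψ k), hx1t.comp hψ.tendsto_atTop, hud⟩
  -- the ratio along x2 is bounded by the distance of directions to d
  have hbound : ∀ k, ε ≤ ‖‖x2 k - p‖⁻¹ • (x2 k - p) - d‖ := by
    intro k
    have hne : x2 k ≠ p := (hgood (ψ k)).2
    have hpos : (0:ℝ) < ‖x2 k - p‖ := norm_pos_iff.mpr (sub_ne_zero.mpr hne)
    have hmem : p + ‖x2 k - p‖ • d ∈ C :=
      ⟨‖x2 k - p‖ • d, ⟨d, hdmem, ‖x2 k - p‖, norm_nonneg _, rfl⟩, rfl⟩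
    have hdist : infDist (x2 k) C ≤ ‖x2 k - p‖ * ‖‖x2 k - p‖⁻¹ • (x2 k - p) - d‖ := by
      have := infDist_le_dist_of_mem (x := x2 k) hmem
      rw [dist_eq_norm] at this
      have heq : x2 k - (p + ‖x2 k - p‖ • d)
          = ‖x2 k - p‖ • (‖x2 k - p‖⁻¹ • (x2 k - p) - d) := by
        rw [smul_sub, smul_smul, mul_inv_cancel₀ hpos.ne', one_smul]
        abel
      rw [heq, norm_smul, Real.norm_eq_abs, abs_of_pos hpos] at this
      exact this
    have hε' : ε ≤ infDist (x2 k) C / ‖x2 k - p‖ := (hφf (ψ k)).1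
    rw [le_div_iff₀ hpos] at hε'
    nlinarith
  have : ∀ᶠ k in atTop, ‖‖x2 k - p‖⁻¹ • (x2 k - p) - d‖ < ε :=
    (tendsto_iff_norm_sub_tendsto_zero.mp hud).eventually_lt_const hε
  obtain ⟨k, hk⟩ := this.exists
  exact absurd (hbound k) (not_le.mpr hk)

lemma infDist_of_cone_ratio [FiniteDimensional ℝ E] {A : Set E} {p : E} (hssp : SSP A p)
    {x : ℕ → E} (hx : ∀ᶠ m in atTop, x m ∈ {z | ∃ w ∈ LDir A p, z = p + w} ∧ x m ≠ p)
    (hxt : Tendsto x atTop (𝓝 p)) :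
    Tendsto (fun m => infDist (x m) A / ‖x m - p‖) atTop (𝓝 0) := by
  by_contra hcon
  obtain ⟨ε, hε, φ, hφ, hφf⟩ := subseq_of_not_tendsto hcon
    (Eventually.of_forall fun m => div_nonneg infDist_nonneg (norm_nonneg _)) hx
  set x1 : ℕ → E := fun k => x (φ k) with hx1
  have hx1t : Tendsto x1 atTop (𝓝 p) := hxt.comp hφ.tendsto_atTop
  have hgood : ∀ k, x1 k ∈ {z : E | ∃ w ∈ LDir A p, z = p + w} ∧ x1 k ≠ p :=
    fun k => (hφf k).2
  have hdirs : ∀ k, ‖x1 k - p‖⁻¹ • (x1 k - p) ∈ dirSet A p :=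
    fun k => cone_dir (hgood k).1 (hgood k).2
  obtain ⟨d, hd1, ψ, hψ, hud⟩ := exists_subseq_dir
    (fun k => ‖x1 k - p‖⁻¹ • (x1 k - p)) (fun k => dir_norm (hgood k).2)
  set x2 : ℕ → E := fun k => x1 (ψ k) with hx2
  have hdmem : d ∈ dirSet A p := dirSet_closed' (fun k => hdirs (ψ k)) hud
  obtain ⟨b, hbA, h1, -⟩ := hssp x2 (fun k => (hgood (ψ k)).2)
    (hx1t.comp hψ.tendsto_atTop) ⟨d, hdmem, hud⟩
  have hbound : ∀ k, ε ≤ ‖x2 k - b k‖ / ‖x2 k - p‖ := by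
    intro k
    have hε' : ε ≤ infDist (x2 k) A / ‖x2 k - p‖ := (hφf (ψ k)).1
    have hle : infDist (x2 k) A ≤ ‖x2 k - b k‖ := by
      have := infDist_le_dist_of_mem (x := x2 k) (hbA k)
      rwa [dist_eq_norm] at this
    have hpos : (0:ℝ) < ‖x2 k - p‖ :=
      norm_pos_iff.mpr (sub_ne_zero.mpr (hgood (ψ k)).2)
    calc ε ≤ infDist (x2 k) A / ‖x2 k - p‖ := hε'
      _ ≤ ‖x2 k - b k‖ / ‖x2 k - p‖ := by gcongr
  obtain ⟨k, hk⟩ := (h1.eventually_lt_const hε).exists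
  exact absurd (hbound k) (not_le.mpr hk)

lemma relClose_to_cone [FiniteDimensional ℝ E] {A : Set E} {p : E} :
    RelClose A {z | ∃ w ∈ LDir A p, z = p + w} p := by
  intro x hx hxt
  obtain ⟨d, hd⟩ := exists_dir hx hxt
  have hpC : p ∈ {z : E | ∃ w ∈ LDir A p, z = p + w} :=
    ⟨0, ⟨d, hd, 0, le_refl 0, (zero_smul ℝ d).symm⟩, (add_zero p).symm⟩
  exact exists_approx_of_infDist ⟨p, hpC⟩ (infDist_cone_ratio hx hxt)
    (hx.mono fun m hm => hm.2)

lemma relClose_from_cone [FiniteDimensional ℝ E] {A : Set E} {p : E}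
    (hp : p ∈ closure A) (hssp : SSP A p) :
    RelClose {z | ∃ w ∈ LDir A p, z = p + w} A p := by
  intro x hx hxt
  have hA : A.Nonempty := by
    rcases A.eq_empty_or_nonempty with h | h
    · rw [h, closure_empty] at hp
      exact absurd hp (notMem_empty p)
    · exact h
  exact exists_approx_of_infDist hA (infDist_of_cone_ratio hssp hx hxt)
    (hx.mono fun m hm => hm.2)

lemma relClose_image {X Y : Set E} {p : E} {h : E → E} {K K' : NNReal}
    (hL : LipschitzWith K h) (hAL : AntilipschitzWith K' h)
    (hXY : RelClose X Y p) : RelClose (h '' X) (h '' Y) (h p) := by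
  intro ξ hξ hξt
  have hex : ∀ m, ∃ z, ξ m ∈ h '' X → (z ∈ X ∧ h z = ξ m) := by
    intro m
    by_cases hm : ξ m ∈ h '' X
    · obtain ⟨z, hz, hze⟩ := hm
      exact ⟨z, fun _ => ⟨hz, hze⟩⟩
    · exact ⟨p, fun c => absurd c hm⟩
  choose z hz using hex
  have hgood : ∀ᶠ m in atTop, z m ∈ X ∧ z m ≠ p ∧ h (z m) = ξ m := by
    filter_upwards [hξ] with m hm
    obtain ⟨hzX, hze⟩ := hz m hm.1
    exact ⟨hzX, fun e => hm.2 (by rw [← hze, e]), hze⟩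
  have hzt : Tendsto z atTop (𝓝 p) := by
    rw [tendsto_iff_dist_tendsto_zero]
    apply squeeze_zero' (Eventually.of_forall fun m => dist_nonneg)
      (g := fun m => (K' : ℝ) * dist (ξ m) (h p))
    · filter_upwards [hgood] with m hm
      calc dist (z m) p ≤ (K' : ℝ) * dist (h (z m)) (h p) := hAL.le_mul_dist _ _
        _ = (K' : ℝ) * dist (ξ m) (h p) := by rw [hm.2.2]
    · have := tendsto_iff_dist_tendsto_zero.mp hξt
      simpa using this.const_mul (K' : ℝ)
  obtain ⟨y, hyY, hr⟩ := hXY z (hgood.mono fun m hm => ⟨hm.1, hm.2.1⟩) hzt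
  refine ⟨fun m => h (y m), fun m => ⟨y m, hyY m, rfl⟩, ?_⟩
  apply squeeze_zero' (Eventually.of_forall fun m => by positivity)
    (g := fun m => ((K : ℝ) * (K' : ℝ)) * (‖z m - y m‖ / ‖z m - p‖))
  · filter_upwards [hgood, hξ] with m hm hm'
    have hzp : (0:ℝ) < ‖z m - p‖ := norm_pos_iff.mpr (sub_ne_zero.mpr hm.2.1)
    have hξp : (0:ℝ) < ‖ξ m - h p‖ := norm_pos_iff.mpr (sub_ne_zero.mpr hm'.2)
    have e1 : ‖ξ m - h (y m)‖ ≤ (K : ℝ) * ‖z m - y m‖ := by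
      have := hL.dist_le_mul (z m) (y m)
      rw [dist_eq_norm, dist_eq_norm, hm.2.2] at this
      exact this
    have e2 : ‖z m - p‖ ≤ (K' : ℝ) * ‖ξ m - h p‖ := by
      have := hAL.le_mul_dist (z m) p
      rw [dist_eq_norm, dist_eq_norm, hm.2.2] at this
      exact this
    have e3 : ‖z m - y m‖ = ‖z m - y m‖ / ‖z m - p‖ * ‖z m - p‖ :=
      (div_mul_cancel₀ _ hzp.ne').symm
    rw [div_le_iff₀ hξp]
    calc ‖ξ m - h (y m)‖ ≤ (K : ℝ) * ‖z m - y m‖ := e1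
      _ = (K : ℝ) * (‖z m - y m‖ / ‖z m - p‖ * ‖z m - p‖) := by rw [← e3]
      _ ≤ (K : ℝ) * (‖z m - y m‖ / ‖z m - p‖ * ((K' : ℝ) * ‖ξ m - h p‖)) := by
          gcongr
      _ = (K : ℝ) * (K' : ℝ) * (‖z m - y m‖ / ‖z m - p‖) * ‖ξ m - h p‖ := by ring
  · simpa using hr.const_mul ((K : ℝ) * (K' : ℝ))

lemma ssp_of_relClose {X Y : Set E} {p : E} (hXY : RelClose X Y p)
    (hYX : RelClose Y X p) (hY : SSP Y p) : SSP X p := by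
  intro a ha hat hdir
  obtain ⟨d, hdX, hdt⟩ := hdir
  obtain ⟨c, hcY, h1, h2⟩ := hY a ha hat ⟨d, dirSet_mono hXY hdX, hdt⟩
  have hap : ∀ m, (0:ℝ) < ‖a m - p‖ :=
    fun m => norm_pos_iff.mpr (sub_ne_zero.mpr (ha m))
  have hsmall : ∀ᶠ m in atTop, ‖a m - c m‖ ≤ 2⁻¹ * ‖a m - p‖ := by
    filter_upwards [h1.eventually_lt_const (show (0:ℝ) < 2⁻¹ by norm_num)] with m hm
    have := (div_lt_iff₀ (hap m)).mp hm
    linarith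
  have hclow : ∀ᶠ m in atTop,
      2⁻¹ * ‖a m - p‖ ≤ ‖c m - p‖ ∧ ‖c m - p‖ ≤ 2 * ‖a m - p‖ := by
    filter_upwards [hsmall] with m hm
    have t1 : ‖a m - p‖ - ‖c m - p‖ ≤ ‖a m - c m‖ := by
      have := norm_sub_norm_le (a m - p) (c m - p)
      rwa [sub_sub_sub_cancel_right] at this
    have t2 : ‖c m - p‖ - ‖a m - p‖ ≤ ‖a m - c m‖ := by
      have := norm_sub_norm_le (c m - p) (a m - p)
      rwa [sub_sub_sub_cancel_right, norm_sub_rev (c m) (a m)] at this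
    constructor <;> linarith
  have hcp : ∀ᶠ m in atTop, c m ≠ p := by
    filter_upwards [hclow] with m hm h
    rw [h, sub_self, norm_zero] at hm
    have := hap m
    linarith [hm.1]
  have hct : Tendsto c atTop (𝓝 p) := by
    rw [tendsto_iff_dist_tendsto_zero]
    apply squeeze_zero' (Eventually.of_forall fun m => dist_nonneg)
      (g := fun m => 2 * ‖a m - p‖)
    · filter_upwards [hclow] with m hm
      rw [dist_eq_norm]
      exact hm.2
    · have := tendsto_iff_dist_tendsto_zero.mp hat
      simp only [dist_eq_norm] at this
      simpa using this.const_mul 2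
  obtain ⟨b, hbX, hr⟩ := hYX c (hcp.mono fun m hm => ⟨hcY m, hm⟩) hct
  have hab : Tendsto (fun m => ‖a m - b m‖ / ‖a m - p‖) atTop (𝓝 0) := by
    apply squeeze_zero' (Eventually.of_forall fun m => by positivity)
      (g := fun m => ‖a m - c m‖ / ‖a m - p‖ + 2 * (‖c m - b m‖ / ‖c m - p‖))
    · filter_upwards [hclow, hcp] with m hm hmp
      have hcpos : (0:ℝ) < ‖c m - p‖ := norm_pos_iff.mpr (sub_ne_zero.mpr hmp)
      have tri : ‖a m - b m‖ ≤ ‖a m - c m‖ + ‖c m - b m‖ :=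
        norm_sub_le_norm_sub_add_norm_sub _ _ _
      have e4 : ‖c m - b m‖ = ‖c m - b m‖ / ‖c m - p‖ * ‖c m - p‖ :=
        (div_mul_cancel₀ _ hcpos.ne').symm
      have hr2 : (0:ℝ) ≤ ‖c m - b m‖ / ‖c m - p‖ := by positivity
      have e3 : ‖c m - b m‖ / ‖a m - p‖ ≤ 2 * (‖c m - b m‖ / ‖c m - p‖) := by
        rw [div_le_iff₀ (hap m)]
        nlinarith [hm.2]
      calc ‖a m - b m‖ / ‖a m - p‖
          ≤ (‖a m - c m‖ + ‖c m - b m‖) / ‖a m - p‖ := by gcongr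
        _ = ‖a m - c m‖ / ‖a m - p‖ + ‖c m - b m‖ / ‖a m - p‖ := add_div _ _ _
        _ ≤ ‖a m - c m‖ / ‖a m - p‖ + 2 * (‖c m - b m‖ / ‖c m - p‖) := by linarith
    · simpa using h1.add (hr.const_mul 2)
  refine ⟨b, hbX, hab, ?_⟩
  have hblow : ∀ᶠ m in atTop, 2⁻¹ * ‖a m - p‖ ≤ ‖b m - p‖ := by
    filter_upwards [hab.eventually_lt_const (show (0:ℝ) < 2⁻¹ by norm_num)] with m hm
    have hsm : ‖a m - b m‖ ≤ 2⁻¹ * ‖a m - p‖ := by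
      have := (div_lt_iff₀ (hap m)).mp hm
      linarith
    have t1 : ‖a m - p‖ - ‖b m - p‖ ≤ ‖a m - b m‖ := by
      have := norm_sub_norm_le (a m - p) (b m - p)
      rwa [sub_sub_sub_cancel_right] at this
    linarith
  apply squeeze_zero' (Eventually.of_forall fun m => by positivity)
    (g := fun m => 2 * (‖a m - b m‖ / ‖a m - p‖))
  · filter_upwards [hblow] with m hm
    have hbpos : (0:ℝ) < ‖b m - p‖ := lt_of_lt_of_le (mul_pos (by norm_num) (hap m)) hm
    rw [div_le_iff₀ hbpos]
    have e4 : ‖a m - b m‖ = ‖a m - b m‖ / ‖a m - p‖ * ‖a m - p‖ :=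
      (div_mul_cancel₀ _ (hap m).ne').symm
    have hr2 : (0:ℝ) ≤ ‖a m - b m‖ / ‖a m - p‖ := by positivity
    nlinarith
  · simpa using hab.const_mul 2

theorem stmt7 {n : ℕ} (A : Set (EuclideanSpace ℝ (Fin n)))
    (p : EuclideanSpace ℝ (Fin n)) (hp : p ∈ closure A)
    (h : EuclideanSpace ℝ (Fin n) → EuclideanSpace ℝ (Fin n))
    (hh : IsBiLipschitz h) (hssp : SSP A p) :
    SSP (h '' A) (h p) ↔
      SSP (h '' {x | ∃ w ∈ LDir A p, x = p + w}) (h p) := by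
  obtain ⟨hbij, K, K', hK, hK'⟩ := hh
  have h1 : RelClose A {x | ∃ w ∈ LDir A p, x = p + w} p := relClose_to_cone
  have h2 : RelClose {x | ∃ w ∈ LDir A p, x = p + w} A p :=
    relClose_from_cone hp hssp
  have H1 : RelClose (h '' A) (h '' {x | ∃ w ∈ LDir A p, x = p + w}) (h p) :=
    relClose_image hK hK' h1
  have H2 : RelClose (h '' {x | ∃ w ∈ LDir A p, x = p + w}) (h '' A) (h p) :=
    relClose_image hK hK' h2
  exact ⟨fun hs => ssp_of_relClose H2 H1 hs, fun hs => ssp_of_relClose H1 H2 hs⟩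
end

section
/- Let A ⊆ ℝⁿ be a nonempty open set, let h : A → ℝ^m be a bi-Lipschitz map (h is injective, Lipschitz, and its inverse h⁻¹ : h(A) → A is Lipschitz), and let τ : ℝ^m → ℝ^k be a map whose restriction to h(A) is Lipschitz. Then there exists a set B ⊆ A with Lebesgue-null complement A \ B such that for every x₀ ∈ B the restriction of τ to h(A) is differentiable at h(x₀): there is a linear map P : ℝ^m → ℝ^k with τ(y) − τ(h(x₀)) − P(y − h(x₀)) = o(‖y − h(x₀)‖) as y → h(x₀) with y ∈ h(A). -/
open Filter Topology Set Asymptotics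

variable {E : Type*} [NormedAddCommGroup E] [NormedSpace ℝ E]

set_option maxHeartbeats 1000000 in
theorem stmt8 {n m k : ℕ} (A : Set (EuclideanSpace ℝ (Fin n)))
    (hA : IsOpen A) (hne : A.Nonempty)
    (h : EuclideanSpace ℝ (Fin n) → EuclideanSpace ℝ (Fin m))
    (hinj : Set.InjOn h A)
    (K : NNReal) (hlip : LipschitzOnWith K h A)
    (K' : NNReal) (hanti : ∀ x ∈ A, ∀ y ∈ A, ‖x - y‖ ≤ (K' : ℝ) * ‖h x - h y‖)
    (τ : EuclideanSpace ℝ (Fin m) → EuclideanSpace ℝ (Fin k))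
    (Kτ : NNReal) (hτ : LipschitzOnWith Kτ τ (h '' A)) :
    ∃ B ⊆ A, MeasureTheory.volume (A \ B) = 0 ∧
      ∀ x₀ ∈ B, ∃ P : EuclideanSpace ℝ (Fin m) →ₗ[ℝ] EuclideanSpace ℝ (Fin k),
        (fun y => τ y - τ (h x₀) - P (y - h x₀))
          =o[𝓝[h '' A] (h x₀)] fun y => y - h x₀ := by
  classical
  have hτh : LipschitzOnWith (Kτ * K) (fun x => τ (h x)) A :=
    hτ.comp hlip (Set.mapsTo_image h A)
  set B : Set (EuclideanSpace ℝ (Fin n)) :=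
    {x | x ∈ A ∧ DifferentiableAt ℝ h x ∧ DifferentiableAt ℝ (fun x => τ (h x)) x} with hB
  refine ⟨B, fun x hx => hx.1, ?_, ?_⟩
  · rw [MeasureTheory.measure_eq_zero_iff_ae_notMem]
    filter_upwards [hlip.ae_differentiableWithinAt_of_mem (μ := MeasureTheory.volume),
      hτh.ae_differentiableWithinAt_of_mem (μ := MeasureTheory.volume)] with x h1 h2
    rintro ⟨hxA, hxB⟩
    exact hxB ⟨hxA, (h1 hxA).differentiableAt (hA.mem_nhds hxA),
      (h2 hxA).differentiableAt (hA.mem_nhds hxA)⟩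
  · rintro x₀ ⟨hx₀A, hdh, hdg⟩
    set Dh := fderiv ℝ h x₀ with hDh
    set Dg := fderiv ℝ (fun x => τ (h x)) x₀ with hDg
    -- the antilipschitz estimate with positive constant
    have hK : ∀ x ∈ A, ∀ y ∈ A, ‖x - y‖ ≤ ((K' : ℝ) + 1) * ‖h x - h y‖ := by
      intro x hx y hy
      calc ‖x - y‖ ≤ (K' : ℝ) * ‖h x - h y‖ := hanti x hx y hy
        _ ≤ ((K' : ℝ) + 1) * ‖h x - h y‖ := by
            apply mul_le_mul_of_nonneg_right (by linarith) (norm_nonneg _)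
    have hKpos : (0 : ℝ) < (K' : ℝ) + 1 := by positivity
    -- Dh is injective
    have hinjDh : LinearMap.ker (Dh : EuclideanSpace ℝ (Fin n) →ₗ[ℝ] EuclideanSpace ℝ (Fin m)) = ⊥ := by
      rw [LinearMap.ker_eq_bot']
      intro v hv
      by_contra hvne
      have hvpos : (0 : ℝ) < ‖v‖ := norm_pos_iff.2 hvne
      have hde := (hdh.hasFDerivAt).isLittleO
      have hc : (0 : ℝ) < (1 / (2 * ((K' : ℝ) + 1))) := by positivity
      have hev := hde.def hc
      have hline : Tendsto (fun t : ℝ => x₀ + t • v) (𝓝 0) (𝓝 x₀) := by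
        have : Continuous (fun t : ℝ => x₀ + t • v) := by continuity
        simpa using this.tendsto 0
      have h1 : ∀ᶠ t : ℝ in 𝓝 0, x₀ + t • v ∈ A := hline (hA.mem_nhds hx₀A)
      have h2 := hline hev
      have h3 : ∀ᶠ t : ℝ in 𝓝[≠] (0:ℝ), False := by
        rw [eventually_nhdsWithin_iff]
        filter_upwards [h1, h2] with t htA hte htne
        simp only [Set.mem_compl_iff, Set.mem_singleton_iff] at htne
        simp only [Set.mem_preimage, Set.mem_setOf_eq] at hte
        have e1 : (x₀ + t • v) - x₀ = t • v := by abel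
        rw [← hDh, e1] at hte
        simp only [ContinuousLinearMap.coe_coe] at hv
        have e2 : Dh (t • v) = 0 := by
          rw [map_smul, hv, smul_zero]
        rw [e2, sub_zero, norm_smul, Real.norm_eq_abs] at hte
        have e3 : |t| * ‖v‖ = ‖(x₀ + t • v) - x₀‖ := by
          rw [e1, norm_smul, Real.norm_eq_abs]
        have e4 := hK _ htA _ hx₀A
        rw [← e3] at e4
        have : |t| * ‖v‖ ≤ ((K' : ℝ) + 1) * (1 / (2 * ((K' : ℝ) + 1)) * (|t| * ‖v‖)) :=
          e4.trans (by nlinarith [hte, abs_nonneg t, norm_nonneg v])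
        have habs : (0:ℝ) < |t| := abs_pos.2 htne
        have hr : ((K' : ℝ) + 1) * (1 / (2 * ((K' : ℝ) + 1)) * (|t| * ‖v‖)) = (1/2) * (|t| * ‖v‖) := by
          field_simp
        rw [hr] at this
        nlinarith [mul_pos habs hvpos]
      have : (𝓝[≠] (0:ℝ)).NeBot := inferInstance
      exact this.ne (eventually_false_iff_eq_bot.mp h3)
    obtain ⟨L, hL⟩ := LinearMap.exists_leftInverse_of_injective (Dh : EuclideanSpace ℝ (Fin n) →ₗ[ℝ] EuclideanSpace ℝ (Fin m)) hinjDh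
    set Lc := LinearMap.toContinuousLinearMap L with hLc
    set Pc := Dg.comp Lc with hPc
    refine ⟨Pc.toLinearMap, ?_⟩
    -- key: P ∘ Dh = Dg
    have hPDh : ∀ w, Pc (Dh w) = Dg w := by
      intro w
      have : L (Dh w) = w := by
        have := LinearMap.congr_fun hL w
        simpa using this
      simp [hPc, hLc, ContinuousLinearMap.comp_apply, LinearMap.coe_toContinuousLinearMap', this]
    -- little-o in the x variable
    have keyx : (fun x => τ (h x) - τ (h x₀) - Pc (h x - h x₀))
        =o[𝓝 x₀] (fun x => h x - h x₀) := by
      have e1 : (fun x => τ (h x) - τ (h x₀) - Dg (x - x₀)) =o[𝓝 x₀] (fun x => x - x₀) :=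
        hdg.hasFDerivAt.isLittleO
      have e2 : (fun x => h x - h x₀ - Dh (x - x₀)) =o[𝓝 x₀] (fun x => x - x₀) :=
        hdh.hasFDerivAt.isLittleO
      have e3 : (fun x => Pc (Dh (x - x₀) - (h x - h x₀))) =o[𝓝 x₀] (fun x => x - x₀) := by
        have := (Pc.isBigO_comp (fun x => Dh (x - x₀) - (h x - h x₀)) (𝓝 x₀))
        exact this.trans_isLittleO (e2.neg_left.congr_left (fun x => by abel))
      have e4 : (fun x => τ (h x) - τ (h x₀) - Pc (h x - h x₀)) =o[𝓝 x₀] (fun x => x - x₀) := by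
        have := e1.add e3
        apply this.congr_left
        intro x
        rw [map_sub Pc, hPDh]
        abel
      -- x - x₀ is O(h x - h x₀)
      have e5 : (fun x => x - x₀) =O[𝓝 x₀] (fun x => h x - h x₀) := by
        apply IsBigO.of_bound ((K' : ℝ) + 1)
        filter_upwards [hA.mem_nhds hx₀A] with x hx
        exact hK x hx x₀ hx₀A
      exact e4.trans_isBigO e5
    -- transfer along h
    have hle : 𝓝[h '' A] (h x₀) ≤ Filter.map h (𝓝 x₀) := by
      intro S hS
      rw [Filter.mem_map, Metric.mem_nhds_iff] at hS
      obtain ⟨ε, hε, hball⟩ := hS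
      rw [mem_nhdsWithin]
      refine ⟨Metric.ball (h x₀) (ε / ((K' : ℝ) + 1)), Metric.isOpen_ball,
        Metric.mem_ball_self (by positivity), ?_⟩
      rintro y ⟨hyball, x, hxA, rfl⟩
      apply hball
      rw [Metric.mem_ball, dist_eq_norm]
      rw [Metric.mem_ball, dist_eq_norm] at hyball
      calc ‖x - x₀‖ ≤ ((K' : ℝ) + 1) * ‖h x - h x₀‖ := hK x hxA x₀ hx₀A
        _ < ((K' : ℝ) + 1) * (ε / ((K' : ℝ) + 1)) := by
            exact mul_lt_mul_of_pos_left hyball hKpos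
        _ = ε := by field_simp
    have : (fun y => τ y - τ (h x₀) - Pc (y - h x₀))
        =o[Filter.map h (𝓝 x₀)] (fun y => y - h x₀) := by
      rw [Asymptotics.isLittleO_map]
      exact keyx
    exact (this.mono hle).congr_left (fun y => rfl)
end

section
/- Let A₁ := {(x,y,z) ∈ ℝ³ : x² + y² = z²}. Then LD_0(A₁) = A₁ and L𝒢D_0(A₁) = {(x,y,z) ∈ ℝ³ : z² ≤ x² + y²}. -/
open Filter Topology Set Asymptotics

variable {E : Type*} [NormedAddCommGroup E] [NormedSpace ℝ E]

/-! ### Auxiliary material for Statement 12 -/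

noncomputable abbrev Stmt12.e3 := EuclideanSpace.equiv (Fin 3) ℝ

namespace Stmt12

local notation "E3" => EuclideanSpace ℝ (Fin 3)

def setA : Set (EuclideanSpace ℝ (Fin 3)) := {v | v 0 ^ 2 + v 1 ^ 2 = v 2 ^ 2}
def setB : Set (EuclideanSpace ℝ (Fin 3)) := {v | v 2 ^ 2 ≤ v 0 ^ 2 + v 1 ^ 2}

theorem coordTendsto {α : Type*} {l : Filter α} {f : α → E3} {v : E3}
    (h : Tendsto f l (𝓝 v)) (k : Fin 3) :
    Tendsto (fun i => f i k) l (𝓝 (v k)) :=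
  ((continuous_apply k).tendsto _).comp ((e3.continuous.tendsto v).comp h)

theorem contCoord (k : Fin 3) : Continuous (fun v : E3 => v k) :=
  (continuous_apply k).comp e3.continuous

theorem closedA : IsClosed setA :=
  isClosed_eq (((contCoord 0).pow 2).add ((contCoord 1).pow 2)) ((contCoord 2).pow 2)

theorem closedB : IsClosed setB :=
  isClosed_le ((contCoord 2).pow 2) (((contCoord 0).pow 2).add ((contCoord 1).pow 2))

theorem smulA (c : ℝ) {v : E3} (hv : v ∈ setA) : c • v ∈ setA := by
  have hv' : v 0 ^ 2 + v 1 ^ 2 = v 2 ^ 2 := hv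
  show (c * v 0) ^ 2 + (c * v 1) ^ 2 = (c * v 2) ^ 2
  linear_combination c ^ 2 * hv'

theorem smulB (c : ℝ) {v : E3} (hv : v ∈ setB) : c • v ∈ setB := by
  have hv' : v 2 ^ 2 ≤ v 0 ^ 2 + v 1 ^ 2 := hv
  show (c * v 2) ^ 2 ≤ (c * v 0) ^ 2 + (c * v 1) ^ 2
  nlinarith [sq_nonneg c]

theorem AsubB : setA ⊆ setB := fun v hv => by
  have hv' : v 0 ^ 2 + v 1 ^ 2 = v 2 ^ 2 := hv
  show v 2 ^ 2 ≤ v 0 ^ 2 + v 1 ^ 2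
  linarith

theorem normsq (v : E3) (h : ‖v‖ = 1) : v 0 ^ 2 + v 1 ^ 2 + v 2 ^ 2 = 1 := by
  rw [EuclideanSpace.norm_eq, Fin.sum_univ_three] at h
  simp only [Real.norm_eq_abs, sq_abs] at h
  rw [Real.sqrt_eq_one] at h
  linarith

theorem hasDerivAt_e3 {g0 g1 g2 : ℝ → ℝ} {d0 d1 d2 : ℝ} {x : ℝ}
    (h0 : HasDerivAt g0 d0 x) (h1 : HasDerivAt g1 d1 x) (h2 : HasDerivAt g2 d2 x)
    {γ : ℝ → E3} (hγ : ∀ t, γ t = e3.symm ![g0 t, g1 t, g2 t])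
    {a : E3} (ha : a = e3.symm ![d0, d1, d2]) :
    HasDerivAt γ a x := by
  have hG : HasDerivAt (fun t => (![g0 t, g1 t, g2 t] : Fin 3 → ℝ)) ![d0, d1, d2] x := by
    rw [hasDerivAt_pi]
    intro i
    fin_cases i <;> simpa using ‹_›
  have := ((e3.symm : (Fin 3 → ℝ) →L[ℝ] E3).hasFDerivAt.comp_hasDerivAt x hG)
  rw [ha]
  exact this.congr_of_eventuallyEq (Eventually.of_forall fun t => by simp [hγ t])

theorem mem_dirSet_of_curve {A : Set E} {q a : E} {γ : ℝ → E}
    (ha : ‖a‖ = 1) (h0 : γ 0 = q) (hd : HasDerivAt γ a 0) (hA : ∀ t, γ t ∈ A) :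
    a ∈ dirSet A q := by
  have hslope : Tendsto (slope γ 0) (𝓝[≠] (0:ℝ)) (𝓝 a) := hasDerivAt_iff_tendsto_slope.mp hd
  have hev : ∀ᶠ t in 𝓝[≠] (0:ℝ), ‖slope γ 0 t - a‖ < 1/2 := by
    have : Tendsto (fun t => ‖slope γ 0 t - a‖) (𝓝[≠] (0:ℝ)) (𝓝 ‖a - a‖) :=
      (hslope.sub_const a).norm
    simp only [sub_self, norm_zero] at this
    exact this.eventually_lt_const (by norm_num)
  rw [eventually_nhdsWithin_iff, Metric.eventually_nhds_iff] at hev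
  obtain ⟨δ, hδ, hδ'⟩ := hev
  set t : ℕ → ℝ := fun i => δ / (i + 2) with ht
  have htpos : ∀ i, 0 < t i := fun i => div_pos hδ (by positivity)
  have htlt : ∀ i, |t i| < δ := by
    intro i
    rw [abs_of_pos (htpos i)]
    rw [div_lt_iff₀ (by positivity)]
    nlinarith [hδ, Nat.cast_nonneg (α := ℝ) i]
  have ht0 : Tendsto t atTop (𝓝 0) := by
    apply Tendsto.div_atTop tendsto_const_nhds
    exact tendsto_atTop_add_const_right _ 2 tendsto_natCast_atTop_atTop
  have htmem : ∀ i, t i ∈ ({0}ᶜ : Set ℝ) := fun i => (htpos i).ne'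
  have htt : Tendsto t atTop (𝓝[≠] (0:ℝ)) :=
    tendsto_nhdsWithin_iff.mpr ⟨ht0, Eventually.of_forall htmem⟩
  have hsl : Tendsto (fun i => slope γ 0 (t i)) atTop (𝓝 a) := hslope.comp htt
  have hslnorm : Tendsto (fun i => ‖slope γ 0 (t i)‖) atTop (𝓝 1) := by
    simpa [ha] using hsl.norm
  have hne : ∀ i, γ (t i) ≠ q := by
    intro i hq
    have h1 := hδ' (by simpa [Real.dist_eq] using htlt i) (htmem i)
    rw [slope_def_module, h0, hq, sub_self, smul_zero] at h1
    rw [zero_sub, norm_neg, ha] at h1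
    norm_num at h1
  have hxq : ∀ i, γ (t i) - q = t i • slope γ 0 (t i) := by
    intro i
    rw [slope_def_module, h0, sub_zero, smul_inv_smul₀ (htpos i).ne']
  refine ⟨ha, fun i => γ (t i), fun i => ⟨hA _, hne i⟩, ?_, ?_⟩
  · have : Tendsto (fun i => γ (t i)) atTop (𝓝 (γ 0)) :=
      (hd.continuousAt.tendsto).comp ht0
    rwa [h0] at this
  · have heq : ∀ i, ‖γ (t i) - q‖⁻¹ • (γ (t i) - q)
        = ‖slope γ 0 (t i)‖⁻¹ • slope γ 0 (t i) := by
      intro i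
      rw [hxq i, norm_smul, Real.norm_eq_abs, abs_of_pos (htpos i), mul_inv, mul_smul,
        smul_comm, inv_smul_smul₀ (htpos i).ne']
    simp only [heq]
    have := (hslnorm.inv₀ (by norm_num)).smul hsl
    simpa using this

/-- The tangency construction at a point `s • (c0, c1, 1)` of the cone. -/
theorem cone_dir {a : E3} {c0 c1 β : ℝ} (hc : c0 ^ 2 + c1 ^ 2 = 1) {s : ℝ} (hs : 0 < s)
    (ha : ‖a‖ = 1)
    (hv0 : a 0 = a 2 * c0 - β * c1) (hv1 : a 1 = a 2 * c1 + β * c0) :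
    a ∈ dirSet setA (s • (e3.symm ![c0, c1, 1])) := by
  set k := β / (2 * s) with hk
  set g0 : ℝ → ℝ := fun t => (s + a 2 * t) * ((1 - (k * t) ^ 2) * c0 - 2 * (k * t) * c1)
      / (1 + (k * t) ^ 2) with hg0
  set g1 : ℝ → ℝ := fun t => (s + a 2 * t) * (2 * (k * t) * c0 + (1 - (k * t) ^ 2) * c1)
      / (1 + (k * t) ^ 2) with hg1
  set g2 : ℝ → ℝ := fun t => s + a 2 * t with hg2
  set γ : ℝ → E3 := fun t => e3.symm ![g0 t, g1 t, g2 t] with hγ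
  have hs' : s ≠ 0 := hs.ne'
  have hkt : HasDerivAt (fun t : ℝ => k * t) k 0 := by
    simpa using (hasDerivAt_id (0:ℝ)).const_mul k
  have hsq : HasDerivAt (fun t : ℝ => (k * t) ^ 2) (2 * (k * 0) ^ 1 * k) 0 := hkt.pow 2
  have hden : HasDerivAt (fun t : ℝ => 1 + (k * t) ^ 2) (2 * (k * 0) ^ 1 * k) 0 :=
    hsq.const_add 1
  have hne : (fun t : ℝ => 1 + (k * t) ^ 2) 0 ≠ 0 := by norm_num
  have hlin : HasDerivAt (fun t : ℝ => s + a 2 * t) (a 2) 0 := by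
    simpa using ((hasDerivAt_id (0:ℝ)).const_mul (a 2)).const_add s
  have H0 : HasDerivAt g0 (a 0) 0 := by
    have hf1 : HasDerivAt (fun t : ℝ => (1 - (k * t) ^ 2) * c0 - 2 * (k * t) * c1)
        (-(2 * (k * 0) ^ 1 * k) * c0 - 2 * k * c1) 0 := by
      have h1 := (hsq.const_sub 1).mul_const c0
      have h2 : HasDerivAt (fun t : ℝ => 2 * (k * t) * c1) (2 * k * c1) 0 := by
        simpa using (hkt.const_mul 2).mul_const c1
      exact h1.sub h2
    have := (hlin.mul hf1).div hden hne
    rw [hg0]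
    refine this.congr_deriv ?_
    rw [hv0]
    simp only [hk]
    field_simp
    ring
  have H1 : HasDerivAt g1 (a 1) 0 := by
    have hf1 : HasDerivAt (fun t : ℝ => 2 * (k * t) * c0 + (1 - (k * t) ^ 2) * c1)
        (2 * k * c0 + -(2 * (k * 0) ^ 1 * k) * c1) 0 := by
      have h1 : HasDerivAt (fun t : ℝ => 2 * (k * t) * c0) (2 * k * c0) 0 := by
        simpa using (hkt.const_mul 2).mul_const c0
      have h2 := (hsq.const_sub 1).mul_const c1
      exact h1.add h2
    have := (hlin.mul hf1).div hden hne
    rw [hg1]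
    refine this.congr_deriv ?_
    rw [hv1]
    simp only [hk]
    field_simp
    ring
  have H2 : HasDerivAt g2 (a 2) 0 := hlin
  have haa : a = e3.symm ![a 0, a 1, a 2] := PiLp.ext fun i => by fin_cases i <;> rfl
  have hder : HasDerivAt γ a 0 := hasDerivAt_e3 H0 H1 H2 (fun t => rfl) haa
  have hγ0 : γ 0 = s • (e3.symm ![c0, c1, 1]) := by
    refine PiLp.ext fun i => ?_
    fin_cases i
    · show g0 0 = s * c0
      rw [hg0]; norm_num
    · show g1 0 = s * c1
      rw [hg1]; norm_num
    · show g2 0 = s * 1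
      rw [hg2]; norm_num
  have hmem : ∀ t, γ t ∈ setA := by
    intro t
    show g0 t ^ 2 + g1 t ^ 2 = g2 t ^ 2
    rw [hg0, hg1, hg2]
    have hdn : (1 + (k * t) ^ 2) ≠ 0 := by positivity
    field_simp
    linear_combination ((s + a 2 * t) ^ 2 * (1 + (k * t) ^ 2) ^ 2) * hc
  exact mem_dirSet_of_curve ha hγ0 hder hmem

/-- Directions at `0` lie in the cone itself. -/
theorem dirSet_zero_subset : dirSet setA 0 ⊆ setA := by
  rintro a ⟨ha, x, hx, hxl, hdir⟩
  have hmem : ∀ i, ‖x i - 0‖⁻¹ • (x i - 0) ∈ setA := by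
    intro i
    rw [sub_zero]
    exact smulA _ (hx i).1
  exact closedA.mem_of_tendsto hdir (Eventually.of_forall hmem)

/-- A point of the cone of norm one is a direction at `0`. -/
theorem unit_mem_dirSet_zero {a : E3} (haA : a ∈ setA) (ha : ‖a‖ = 1) :
    a ∈ dirSet setA 0 := by
  have hd : HasDerivAt (fun t : ℝ => t • a) a 0 := by
    simpa using (hasDerivAt_id (0:ℝ)).smul_const a
  exact mem_dirSet_of_curve ha (by simp) hd (fun t => smulA t haA)

theorem dirSet_zero_subset_GDir {A : Set E} {a : E} (h0 : (0:E) ∈ A) (ha : a ∈ dirSet A 0) :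
    a ∈ GDir A 0 := by
  exact ⟨ha.1, fun _ => 0, fun _ => h0, tendsto_const_nhds, fun _ => a, fun _ => ha,
    tendsto_const_nhds⟩

theorem zero_mem_A : (0 : E3) ∈ setA := by
  show (0:ℝ) ^ 2 + (0:ℝ) ^ 2 = (0:ℝ) ^ 2
  norm_num

/-- Any direction at a point of the cone lies in `setB`. -/
theorem dir_subset_B {q u : E3} (hq : q ∈ setA) (hu : u ∈ dirSet setA q) : u ∈ setB := by
  by_cases h2 : q 2 = 0
  · have hq' : q 0 ^ 2 + q 1 ^ 2 = q 2 ^ 2 := hq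
    have h0 : q 0 = 0 := by
      have : q 0 ^ 2 = 0 := by nlinarith [sq_nonneg (q 1)]
      exact pow_eq_zero_iff (by norm_num) |>.mp this
    have h1 : q 1 = 0 := by
      have : q 1 ^ 2 = 0 := by nlinarith [sq_nonneg (q 0)]
      exact pow_eq_zero_iff (by norm_num) |>.mp this
    have hq0 : q = 0 := PiLp.ext fun i => by fin_cases i <;> assumption
    rw [hq0] at hu
    exact AsubB (dirSet_zero_subset hu)
  · obtain ⟨hu1, x, hx, hxl, hdir⟩ := hu
    set n : ℕ → ℝ := fun i => ‖x i - q‖ with hn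
    set D : Fin 3 → ℕ → ℝ := fun k i => ‖x i - q‖⁻¹ * (x i k - q k) with hD
    have hDt : ∀ k : Fin 3, Tendsto (D k) atTop (𝓝 (u k)) := fun k => coordTendsto hdir k
    have hnt : Tendsto n atTop (𝓝 0) := tendsto_iff_norm_sub_tendsto_zero.mp hxl
    have hkey : ∀ i, 2 * (q 0 * D 0 i + q 1 * D 1 i - q 2 * D 2 i)
        = -(n i * (D 0 i ^ 2 + D 1 i ^ 2 - D 2 i ^ 2)) := by
      intro i
      have hni : n i ≠ 0 := norm_ne_zero_iff.mpr (sub_ne_zero.mpr (hx i).2)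
      have e0 : x i 0 = q 0 + n i * D 0 i := by
        simp only [hD, hn]
        rw [mul_inv_cancel_left₀ (show ‖x i - q‖ ≠ 0 from hni)]
        ring
      have e1 : x i 1 = q 1 + n i * D 1 i := by
        simp only [hD, hn]
        rw [mul_inv_cancel_left₀ (show ‖x i - q‖ ≠ 0 from hni)]
        ring
      have e2 : x i 2 = q 2 + n i * D 2 i := by
        simp only [hD, hn]
        rw [mul_inv_cancel_left₀ (show ‖x i - q‖ ≠ 0 from hni)]
        ring
      have hAi : x i 0 ^ 2 + x i 1 ^ 2 = x i 2 ^ 2 := (hx i).1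
      rw [e0, e1, e2] at hAi
      have hq' : q 0 ^ 2 + q 1 ^ 2 = q 2 ^ 2 := hq
      have hfac : n i * (2 * (q 0 * D 0 i + q 1 * D 1 i - q 2 * D 2 i)
          + n i * (D 0 i ^ 2 + D 1 i ^ 2 - D 2 i ^ 2)) = 0 := by
        linear_combination hAi - hq'
      rcases mul_eq_zero.mp hfac with h | h
      · exact absurd h hni
      · linarith
    have hL : Tendsto (fun i => 2 * (q 0 * D 0 i + q 1 * D 1 i - q 2 * D 2 i)) atTop
        (𝓝 (2 * (q 0 * u 0 + q 1 * u 1 - q 2 * u 2))) := by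
      exact (((((hDt 0).const_mul (q 0)).add ((hDt 1).const_mul (q 1))).sub
        ((hDt 2).const_mul (q 2))).const_mul 2)
    have hR : Tendsto (fun i => 2 * (q 0 * D 0 i + q 1 * D 1 i - q 2 * D 2 i)) atTop (𝓝 0) := by
      simp only [hkey]
      have : Tendsto (fun i => n i * (D 0 i ^ 2 + D 1 i ^ 2 - D 2 i ^ 2)) atTop
          (𝓝 (0 * (u 0 ^ 2 + u 1 ^ 2 - u 2 ^ 2))) :=
        hnt.mul ((((hDt 0).pow 2).add ((hDt 1).pow 2)).sub ((hDt 2).pow 2))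
      rw [zero_mul] at this
      simpa using this.neg
    have horth : q 0 * u 0 + q 1 * u 1 - q 2 * u 2 = 0 := by
      have := tendsto_nhds_unique hL hR
      linarith
    have hq' : q 0 ^ 2 + q 1 ^ 2 = q 2 ^ 2 := hq
    have hq2pos : 0 < q 2 ^ 2 := by positivity
    show u 2 ^ 2 ≤ u 0 ^ 2 + u 1 ^ 2
    have key : q 2 ^ 2 * (u 0 ^ 2 + u 1 ^ 2 - u 2 ^ 2) = (q 0 * u 1 - q 1 * u 0) ^ 2 := by
      linear_combination (-(u 0 ^ 2 + u 1 ^ 2)) * hq' + (q 0 * u 0 + q 1 * u 1 + q 2 * u 2) * horth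
    nlinarith [key, sq_nonneg (q 0 * u 1 - q 1 * u 0), hq2pos]

/-- Key construction: any unit vector of `setB` lies in `GDir setA 0`. -/
theorem unit_mem_GDir {a : E3} (ha : ‖a‖ = 1) (hB : a ∈ setB) : a ∈ GDir setA 0 := by
  have hB' : a 2 ^ 2 ≤ a 0 ^ 2 + a 1 ^ 2 := hB
  have hsum := normsq a ha
  have hr2 : 0 < a 0 ^ 2 + a 1 ^ 2 := by nlinarith [sq_nonneg (a 2)]
  set r2 := a 0 ^ 2 + a 1 ^ 2 with hr2d
  set β := Real.sqrt (r2 - a 2 ^ 2) with hβd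
  have hβ2 : β ^ 2 = r2 - a 2 ^ 2 := Real.sq_sqrt (by linarith)
  set c0 := (a 2 * a 0 + β * a 1) / r2 with hc0
  set c1 := (a 2 * a 1 - β * a 0) / r2 with hc1
  have hc : c0 ^ 2 + c1 ^ 2 = 1 := by
    rw [hc0, hc1]
    field_simp
    linear_combination (a 0 ^ 2 + a 1 ^ 2) * hβ2
  have hv0 : a 0 = a 2 * c0 - β * c1 := by
    rw [hc0, hc1]
    field_simp
    linear_combination (-(a 0)) * hβ2
  have hv1 : a 1 = a 2 * c1 + β * c0 := by
    rw [hc0, hc1]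
    field_simp
    linear_combination (-(a 1)) * hβ2
  set w : E3 := e3.symm ![c0, c1, 1] with hw
  refine ⟨ha, fun m => (1 / (m + 1 : ℝ)) • w, ?_, ?_, fun _ => a, ?_, tendsto_const_nhds⟩
  · intro m
    show ((1 / (m + 1 : ℝ)) * c0) ^ 2 + ((1 / (m + 1 : ℝ)) * c1) ^ 2
        = ((1 / (m + 1 : ℝ)) * 1) ^ 2
    linear_combination (1 / (m + 1 : ℝ)) ^ 2 * hc
  · have := (show Tendsto (fun m : ℕ => 1 / ((m : ℝ) + 1)) atTop (𝓝 0) from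
        tendsto_one_div_add_atTop_nhds_zero_nat).smul_const w
    simpa using this
  · intro m
    have hs : (0:ℝ) < 1 / (m + 1 : ℝ) := by positivity
    exact cone_dir hc hs ha hv0 hv1

end Stmt12

open Stmt12 in
theorem stmt12 :
    LDir {v : EuclideanSpace ℝ (Fin 3) | v 0 ^ 2 + v 1 ^ 2 = v 2 ^ 2} 0
        = {v : EuclideanSpace ℝ (Fin 3) | v 0 ^ 2 + v 1 ^ 2 = v 2 ^ 2} ∧
    LGDir {v : EuclideanSpace ℝ (Fin 3) | v 0 ^ 2 + v 1 ^ 2 = v 2 ^ 2} 0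
        = {v : EuclideanSpace ℝ (Fin 3) | v 2 ^ 2 ≤ v 0 ^ 2 + v 1 ^ 2} := by
  have hA : {v : EuclideanSpace ℝ (Fin 3) | v 0 ^ 2 + v 1 ^ 2 = v 2 ^ 2} = setA := rfl
  have hB : {v : EuclideanSpace ℝ (Fin 3) | v 2 ^ 2 ≤ v 0 ^ 2 + v 1 ^ 2} = setB := rfl
  rw [hA, hB]
  -- a distinguished nonzero point of the cone
  have hv' : (e3.symm ![1, 0, 1] : EuclideanSpace ℝ (Fin 3)) ∈ setA := by
    show (1:ℝ) ^ 2 + (0:ℝ) ^ 2 = (1:ℝ) ^ 2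
    norm_num
  have hv'ne : (e3.symm ![1, 0, 1] : EuclideanSpace ℝ (Fin 3)) ≠ 0 := by
    intro h
    have := congrArg (fun v : EuclideanSpace ℝ (Fin 3) => v 0) h
    simp at this
  have hdirne : ∃ a, a ∈ dirSet setA 0 := by
    refine ⟨‖(e3.symm ![1, 0, 1] : EuclideanSpace ℝ (Fin 3))‖⁻¹ • e3.symm ![1, 0, 1], ?_⟩
    exact unit_mem_dirSet_zero (smulA _ hv') (by simpa using norm_smul_inv_norm (𝕜 := ℝ) hv'ne)
  constructor
  · ext v
    constructor
    · rintro ⟨a, haD, t, ht, rfl⟩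
      exact smulA t (dirSet_zero_subset haD)
    · intro hv
      by_cases h : v = 0
      · obtain ⟨a, haD⟩ := hdirne
        exact ⟨a, haD, 0, le_refl 0, by rw [h, zero_smul]⟩
      · refine ⟨‖v‖⁻¹ • v, unit_mem_dirSet_zero (smulA _ hv)
          (by simpa using norm_smul_inv_norm (𝕜 := ℝ) h), ‖v‖, norm_nonneg v, ?_⟩
        rw [smul_inv_smul₀ (norm_ne_zero_iff.mpr h)]
  · ext v
    constructor
    · rintro ⟨a, ⟨ha1, q, hqA, hql, u, huD, hul⟩, t, ht, rfl⟩
      have hmem : ∀ m, u m ∈ setB := fun m => dir_subset_B (hqA m) (huD m)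
      exact smulB t (closedB.mem_of_tendsto hul (Eventually.of_forall hmem))
    · intro hv
      by_cases h : v = 0
      · obtain ⟨a, haD⟩ := hdirne
        exact ⟨a, dirSet_zero_subset_GDir zero_mem_A haD, 0, le_refl 0, by rw [h, zero_smul]⟩
      · have hn : ‖v‖ ≠ 0 := norm_ne_zero_iff.mpr h
        refine ⟨‖v‖⁻¹ • v, unit_mem_GDir (by simpa using norm_smul_inv_norm (𝕜 := ℝ) h)
          (smulB _ hv), ‖v‖, norm_nonneg v, ?_⟩
        rw [smul_inv_smul₀ hn]
end
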